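/- arXiv:1703.00823 — 4 statements merged into one kernel-verified Lean document; each statement's English description precedes it below -/
import Mathlib

section
/- Let d ≥ 2 and let S be the set of rational primes dividing (2d−2)!. Then GR_d^1[2d](ℚ,S)/PGL_2(ℤ_S) is infinite. Indeed, there are infinitely many PGL_2(ℤ_S)-equivalence classes of preperiodic triples (f,X,X) in GR_d^1[2d](ℚ,S). -/
open Polynomial
open scoped Classical

noncomputable section

/-- The projective line over `L`: `L` together with a point at infinity (`none`). -/
abbrev ProjLine (L : Type*) := Option L

namespace ProjLine

variable {L : Type*} [Field L]

/-- Value of the rational map `p/q` at a finite point `x`. -/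
def evalAt (p q : L[X]) (x : L) : ProjLine L :=
  if q.eval x = 0 then none else some (p.eval x / q.eval x)

/-- Value at a point of the projective line of the degree-`d` morphism whose
dehomogenized description is the pair `(p, q)` (i.e. the morphism
`[Y^d·p(X/Y) : Y^d·q(X/Y)]` in homogeneous coordinates). -/
def eval (d : ℕ) (p q : L[X]) : ProjLine L → ProjLine L
  | some x => evalAt p q x
  | none => evalAt (p.reflect d) (q.reflect d) 0

/-- Ramification index of `p/q` at a finite point `x`. -/
def ramAt (p q : L[X]) (x : L) : ℕ :=
  if q.eval x = 0 then rootMultiplicity x q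
  else rootMultiplicity x (C (q.eval x) * p - C (p.eval x) * q)

/-- Ramification index at a point of the projective line of the degree-`d` morphism
with dehomogenized description `(p, q)`. -/
def ram (d : ℕ) (p q : L[X]) : ProjLine L → ℕ
  | some x => ramAt p q x
  | none => ramAt (p.reflect d) (q.reflect d) 0

/-- The Möbius transformation of the projective line attached to a 2×2 matrix. -/
def mobius (M : Matrix (Fin 2) (Fin 2) L) : ProjLine L → ProjLine L
  | some x => if M 1 0 * x + M 1 1 = 0 then none
      else some ((M 0 0 * x + M 0 1) / (M 1 0 * x + M 1 1))
  | none => if M 1 0 = 0 then none else some (M 0 0 / M 1 0)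

/-- The Sylvester matrix of the binary forms of degrees `d` and `e` whose
dehomogenizations are `p` and `q`. -/
def sylvester (d e : ℕ) (p q : L[X]) : Matrix (Fin (e + d)) (Fin (e + d)) L :=
  Matrix.of fun i j =>
    if (i : ℕ) < e then
      (if (i : ℕ) ≤ (j : ℕ) ∧ (j : ℕ) ≤ (i : ℕ) + d then p.coeff (d + (i : ℕ) - (j : ℕ)) else 0)
    else
      (if (i : ℕ) - e ≤ (j : ℕ) ∧ (j : ℕ) ≤ ((i : ℕ) - e) + e then
        q.coeff (e + ((i : ℕ) - e) - (j : ℕ)) else 0)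

/-- The resultant of the binary forms of degrees `d` and `e` whose dehomogenizations
are `p` and `q`, as a Sylvester determinant. -/
def resultant (d e : ℕ) (p q : L[X]) : L := (sylvester d e p q).det

/-- Reduction of a point of the projective line over `L` modulo (the maximal ideal of)
a valuation subring `O` of `L`. -/
def red (O : ValuationSubring L) : ProjLine L → ProjLine (IsLocalRing.ResidueField ↥O)
  | some x => if h : x ∈ O then some (IsLocalRing.residue ↥O ⟨x, h⟩) else none
  | none => none

end ProjLine

/-- A pair of polynomials `(p, q)` over a field is the (dehomogenized) description of a
morphism `P¹ → P¹` of degree `d`:  `p` and `q` are coprime, have degree at most `d`,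
and at least one of them has degree exactly `d`. -/
def IsRatMapOfDeg {F : Type*} [Field F] (d : ℕ) (p q : F[X]) : Prop :=
  IsCoprime p q ∧ p.natDegree ≤ d ∧ q.natDegree ≤ d ∧ (p.natDegree = d ∨ q.natDegree = d)

open IsDedekindDomain NumberField

/-- The finite places of a number field `K`, i.e. the nonzero primes of its ring of
integers.  (Archimedean places impose no good-reduction conditions, so a finite set `S`
of places containing all archimedean ones is modelled by its finite set of
nonarchimedean members.) -/
abbrev NFPlace (K : Type*) [Field K] [NumberField K] := HeightOneSpectrum (𝓞 K)

variable {K : Type*} [Field K] [NumberField K]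

/-- `x ∈ R_S`: `x` is integral at every place outside `S`. -/
def SInteger (S : Set (NFPlace K)) (x : K) : Prop :=
  ∀ v : NFPlace K, v ∉ S → v.valuation K x ≤ 1

/-- `x ∈ R_S^×`: `x` is a unit at every place outside `S`. -/
def SUnit (S : Set (NFPlace K)) (x : K) : Prop :=
  x ≠ 0 ∧ ∀ v : NFPlace K, v ∉ S → v.valuation K x = 1

section Ext

variable {Kb : Type*} [Field Kb] [Algebra K Kb]

/-- A valuation subring `O` of an extension `Kb` of `K` lies over the place `v` of `K`
if its restriction to `K` is exactly the valuation ring of `v`. -/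
def LiesOver (O : ValuationSubring Kb) (v : NFPlace K) : Prop :=
  ∀ x : K, algebraMap K Kb x ∈ O ↔ v.valuation K x ≤ 1

/-- A set `X` of points of the projective line over an extension of `K` has good
reduction outside `S` if for every place `v ∉ S` and every extension of `v`
(i.e. every valuation subring lying over `v`), reduction is injective on `X`. -/
def GoodRedPoints (S : Set (NFPlace K)) (X : Set (ProjLine Kb)) : Prop :=
  ∀ v : NFPlace K, v ∉ S → ∀ O : ValuationSubring Kb, LiesOver O v →
    Set.InjOn (ProjLine.red O) X

/-- `X` is stable under the action of `Gal(Kb/K)`. -/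
def GalInvariant (X : Set (ProjLine Kb)) : Prop :=
  ∀ σ : Kb ≃ₐ[K] Kb, ∀ P ∈ X, Option.map (⇑σ) P ∈ X

end Ext

variable (K) in
/-- A triple `(f, Y, X)` consisting of (the dehomogenized description of) a rational
map and two sets of points of `P¹(K̄)`. -/
structure DynTriple where
  p : K[X]
  q : K[X]
  Y : Set (ProjLine (AlgebraicClosure K))
  X : Set (ProjLine (AlgebraicClosure K))

/-- Base change of a polynomial over `K` to the algebraic closure. -/
def polyBar (p : K[X]) : (AlgebraicClosure K)[X] := p.map (algebraMap K (AlgebraicClosure K))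

/-- Base change of a matrix over `K` to the algebraic closure. -/
def matBar (M : Matrix (Fin 2) (Fin 2) K) : Matrix (Fin 2) (Fin 2) (AlgebraicClosure K) :=
  M.map (algebraMap K (AlgebraicClosure K))

/-- `f` (given by the pair `(p,q)` of degree `d`) has simple good reduction outside `S`:
some `PGL₂(K)`-conjugate of `f` is given by a pair of `S`-integral polynomials whose
resultant is an `S`-unit. -/
def SimpleGoodRed (S : Set (NFPlace K)) (d : ℕ) (p q : K[X]) : Prop :=
  ∃ (M : Matrix (Fin 2) (Fin 2) K) (p' q' : K[X]),
    M.det ≠ 0 ∧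
    IsRatMapOfDeg d p' q' ∧
    (∀ n, SInteger S (p'.coeff n)) ∧ (∀ n, SInteger S (q'.coeff n)) ∧
    SUnit S (ProjLine.resultant d d p' q') ∧
    ∀ P : ProjLine K,
      ProjLine.mobius M (ProjLine.eval d p' q' P)
        = ProjLine.eval d p q (ProjLine.mobius M P)

/-- Membership in `𝐺𝑅̃¹_d[n](K,S)`:  `(f, Y, X)` with `f` of degree `d`, `X = Y ∪ f(Y)`
finite and Galois invariant, total ramification weight `n` on `Y`, and `X` of good
reduction outside `S`.  (No good-reduction requirement on `f` itself.) -/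
def MemGRtilde (S : Set (NFPlace K)) (d n : ℕ) (t : DynTriple K) : Prop :=
  IsRatMapOfDeg d t.p t.q ∧
  t.Y.Finite ∧
  t.X = t.Y ∪ (ProjLine.eval d (polyBar t.p) (polyBar t.q) '' t.Y) ∧
  GalInvariant (K := K) t.X ∧
  (∑ᶠ P ∈ t.Y, ProjLine.ram d (polyBar t.p) (polyBar t.q) P) = n ∧
  GoodRedPoints S t.X

/-- Membership in `𝐺𝑅¹_d[n](K,S)`: as in `MemGRtilde`, and in addition `f` has simple
good reduction outside `S`. -/
def MemGR (S : Set (NFPlace K)) (d n : ℕ) (t : DynTriple K) : Prop :=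
  MemGRtilde S d n t ∧ SimpleGoodRed S d t.p t.q

/-- Two triples are `PGL₂(R_S)`-equivalent:  `t' = φ⁻¹ ∘ t ∘ φ` for some `φ = M` with
`S`-integral entries and `S`-unit determinant. -/
def TripleEquiv (S : Set (NFPlace K)) (d : ℕ) (t t' : DynTriple K) : Prop :=
  ∃ M : Matrix (Fin 2) (Fin 2) K,
    (∀ i j, SInteger S (M i j)) ∧ SUnit S M.det ∧
    (∀ P, ProjLine.mobius (matBar M) (ProjLine.eval d (polyBar t'.p) (polyBar t'.q) P)
        = ProjLine.eval d (polyBar t.p) (polyBar t.q) (ProjLine.mobius (matBar M) P)) ∧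
    ProjLine.mobius (matBar M) '' t'.Y = t.Y ∧
    ProjLine.mobius (matBar M) '' t'.X = t.X

end

noncomputable section
open Polynomial IsDedekindDomain NumberField

section AuxGeneric

variable {L : Type*} [Field L]

lemma mobius_some (M : Matrix (Fin 2) (Fin 2) L) (x : L) :
    ProjLine.mobius M (some x) = if M 1 0 * x + M 1 1 = 0 then none
      else some ((M 0 0 * x + M 0 1) / (M 1 0 * x + M 1 1)) := rfl

lemma mobius_none (M : Matrix (Fin 2) (Fin 2) L) :
    ProjLine.mobius M none = if M 1 0 = 0 then none else some (M 0 0 / M 1 0) := rfl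

lemma mobius_mul (A B : Matrix (Fin 2) (Fin 2) L) (hA : A.det ≠ 0) (hB : B.det ≠ 0)
    (P : ProjLine L) :
    ProjLine.mobius (A * B) P = ProjLine.mobius A (ProjLine.mobius B P) := by
  rw [Matrix.det_fin_two] at hA hB
  have h00 : (A * B) 0 0 = A 0 0 * B 0 0 + A 0 1 * B 1 0 := by
    simp [Matrix.mul_apply, Fin.sum_univ_two]
  have h01 : (A * B) 0 1 = A 0 0 * B 0 1 + A 0 1 * B 1 1 := by
    simp [Matrix.mul_apply, Fin.sum_univ_two]
  have h10 : (A * B) 1 0 = A 1 0 * B 0 0 + A 1 1 * B 1 0 := by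
    simp [Matrix.mul_apply, Fin.sum_univ_two]
  have h11 : (A * B) 1 1 = A 1 0 * B 0 1 + A 1 1 * B 1 1 := by
    simp [Matrix.mul_apply, Fin.sum_univ_two]
  cases P with
  | some x =>
    have key : ¬ (B 0 0 * x + B 0 1 = 0 ∧ B 1 0 * x + B 1 1 = 0) := by
      rintro ⟨k1, k2⟩
      exact hB (by linear_combination (-(B 1 0)) * k1 + (B 0 0) * k2)
    have hden : (A * B) 1 0 * x + (A * B) 1 1
        = A 1 0 * (B 0 0 * x + B 0 1) + A 1 1 * (B 1 0 * x + B 1 1) := by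
      rw [h10, h11]; ring
    have hnum : (A * B) 0 0 * x + (A * B) 0 1
        = A 0 0 * (B 0 0 * x + B 0 1) + A 0 1 * (B 1 0 * x + B 1 1) := by
      rw [h00, h01]; ring
    rw [mobius_some, mobius_some, hden, hnum]
    by_cases hD : B 1 0 * x + B 1 1 = 0
    · have hN : B 0 0 * x + B 0 1 ≠ 0 := fun h => key ⟨h, hD⟩
      rw [if_pos hD, mobius_none]
      rw [hD, mul_zero, add_zero, mul_zero, add_zero]
      by_cases hc : A 1 0 = 0
      · rw [if_pos (by rw [hc, zero_mul]), if_pos hc]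
      · rw [if_neg (mul_ne_zero hc hN), if_neg hc]
        congr 1
        rw [mul_div_mul_right _ _ hN]
    · rw [if_neg hD, mobius_some]
      have hcondeq : A 1 0 * ((B 0 0 * x + B 0 1) / (B 1 0 * x + B 1 1)) + A 1 1
          = (A 1 0 * (B 0 0 * x + B 0 1) + A 1 1 * (B 1 0 * x + B 1 1))
              / (B 1 0 * x + B 1 1) := by
        rw [mul_div_assoc', div_add' _ _ _ hD]
      by_cases hT : A 1 0 * (B 0 0 * x + B 0 1) + A 1 1 * (B 1 0 * x + B 1 1) = 0
      · rw [if_pos hT, if_pos (by rw [hcondeq, hT, zero_div])]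
      · rw [if_neg hT, if_neg (by rw [hcondeq]; exact div_ne_zero hT hD)]
        congr 1
        rw [hcondeq]
        have hnumeq : A 0 0 * ((B 0 0 * x + B 0 1) / (B 1 0 * x + B 1 1)) + A 0 1
            = (A 0 0 * (B 0 0 * x + B 0 1) + A 0 1 * (B 1 0 * x + B 1 1))
                / (B 1 0 * x + B 1 1) := by
          rw [mul_div_assoc', div_add' _ _ _ hD]
        rw [hnumeq, div_div_div_cancel_right₀]
        exact hD
  | none =>
    rw [mobius_none (A * B), mobius_none B, h10, h00]
    by_cases hc' : B 1 0 = 0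
    · rw [if_pos hc', mobius_none A]
      have hB00 : B 0 0 ≠ 0 := fun h => hB (by rw [h, hc']; ring)
      rw [hc', mul_zero, add_zero, mul_zero, add_zero]
      by_cases hc : A 1 0 = 0
      · rw [if_pos (by rw [hc, zero_mul]), if_pos hc]
      · rw [if_neg (mul_ne_zero hc hB00), if_neg hc]
        congr 1
        rw [mul_div_mul_right _ _ hB00]
    · rw [if_neg hc', mobius_some]
      have hcondeq : A 1 0 * (B 0 0 / B 1 0) + A 1 1
          = (A 1 0 * B 0 0 + A 1 1 * B 1 0) / B 1 0 := by
        field_simp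
      by_cases hT : A 1 0 * B 0 0 + A 1 1 * B 1 0 = 0
      · rw [if_pos hT, if_pos (by rw [hcondeq, hT, zero_div])]
      · rw [if_neg hT, if_neg (by rw [hcondeq]; exact div_ne_zero hT hc')]
        congr 1
        rw [hcondeq]
        have hnumeq : A 0 0 * (B 0 0 / B 1 0) + A 0 1
            = (A 0 0 * B 0 0 + A 0 1 * B 1 0) / B 1 0 := by
          field_simp
        rw [hnumeq, div_div_div_cancel_right₀]
        exact hc'

lemma mobius_smul_one (c : L) (hc : c ≠ 0) (P : ProjLine L) :
    ProjLine.mobius (c • (1 : Matrix (Fin 2) (Fin 2) L)) P = P := by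
  cases P with
  | some x =>
    rw [mobius_some]
    rw [if_neg (by simp [Matrix.smul_apply, Matrix.one_apply, hc])]
    simp [Matrix.smul_apply, Matrix.one_apply, hc, mul_div_assoc]
  | none =>
    rw [mobius_none]
    rw [if_pos (by simp [Matrix.smul_apply, Matrix.one_apply])]

lemma eval_powmap_some (d : ℕ) (hd : d ≠ 0) (c x : L) :
    ProjLine.eval d (C c) (X ^ d) (some x)
      = if x = 0 then none else some (c / x ^ d) := by
  by_cases hx : x = 0
  · simp [ProjLine.eval, ProjLine.evalAt, hx, zero_pow hd]
  · simp [ProjLine.eval, ProjLine.evalAt, hx, pow_eq_zero_iff hd]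

lemma eval_powmap_none (d : ℕ) (hd : d ≠ 0) (c : L) :
    ProjLine.eval d (C c) (X ^ d) none = some 0 := by
  have h1 : (C c : L[X]).reflect d = C c * X ^ d := reflect_C c d
  have h2 : (X ^ d : L[X]).reflect d = 1 := by
    rw [reflect_monomial, revAt_le (le_refl d), Nat.sub_self, pow_zero]
  simp [ProjLine.eval, ProjLine.evalAt, h1, h2, zero_pow hd]

end AuxGeneric

section AuxRat

abbrev QBar := AlgebraicClosure ℚ

abbrev ι : ℚ →+* QBar := algebraMap ℚ QBar

lemma ι_inj : Function.Injective ι := ι.injective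

lemma polyBar_C (b : ℚ) : polyBar (C b) = C (ι b) := Polynomial.map_C _

lemma polyBar_Xpow (d : ℕ) : polyBar (X ^ d : ℚ[X]) = X ^ d := by
  simp [polyBar]

lemma matBar_apply (M : Matrix (Fin 2) (Fin 2) ℚ) (i j : Fin 2) :
    matBar M i j = ι (M i j) := rfl

lemma matBar_mul (M N : Matrix (Fin 2) (Fin 2) ℚ) :
    matBar (M * N) = matBar M * matBar N := by
  simp [matBar, Matrix.map_mul]

lemma matBar_det (M : Matrix (Fin 2) (Fin 2) ℚ) :
    (matBar M).det = ι M.det := by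
  rw [matBar, ← RingHom.mapMatrix_apply, ← RingHom.map_det]; rfl

lemma matBar_smul_one (c : ℚ) :
    matBar (c • (1 : Matrix (Fin 2) (Fin 2) ℚ)) = (ι c) • 1 := by
  ext i j
  by_cases h : i = j <;> simp [matBar, Matrix.smul_apply, Matrix.one_apply, h]

-- S-integers and S-units
lemma SInteger.mul {S : Set (NFPlace ℚ)} {x y : ℚ}
    (hx : SInteger S x) (hy : SInteger S y) : SInteger S (x * y) := by
  intro v hv
  rw [map_mul]
  exact mul_le_one' (hx v hv) (hy v hv)

lemma SInteger.add {S : Set (NFPlace ℚ)} {x y : ℚ}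
    (hx : SInteger S x) (hy : SInteger S y) : SInteger S (x + y) := by
  intro v hv
  exact le_trans ((v.valuation ℚ).map_add x y) (max_le (hx v hv) (hy v hv))

lemma SInteger.neg {S : Set (NFPlace ℚ)} {x : ℚ}
    (hx : SInteger S x) : SInteger S (-x) := by
  intro v hv
  rw [Valuation.map_neg]
  exact hx v hv

lemma SInteger_zero {S : Set (NFPlace ℚ)} : SInteger S (0 : ℚ) := by
  intro v hv
  rw [map_zero]
  exact zero_le'

lemma SInteger_one {S : Set (NFPlace ℚ)} : SInteger S (1 : ℚ) := by
  intro v hv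
  rw [map_one]

lemma SUnit_one {S : Set (NFPlace ℚ)} : SUnit S (1 : ℚ) :=
  ⟨one_ne_zero, fun v _ => map_one (v.valuation ℚ)⟩

lemma SUnit_neg_one {S : Set (NFPlace ℚ)} : SUnit S (-1 : ℚ) :=
  ⟨by norm_num, fun v _ => by rw [Valuation.map_neg, map_one]⟩

lemma SUnit.mul {S : Set (NFPlace ℚ)} {x y : ℚ}
    (hx : SUnit S x) (hy : SUnit S y) : SUnit S (x * y) :=
  ⟨mul_ne_zero hx.1 hy.1, fun v hv => by rw [map_mul, hx.2 v hv, hy.2 v hv, mul_one]⟩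

open IsDedekindDomain

/-- The place of `ℚ` attached to a rational prime. -/
def placeOf (ℓ : ℕ) (hl : ℓ.Prime) : NFPlace ℚ where
  asIdeal := Ideal.comap (Rat.ringOfIntegersEquiv : 𝓞 ℚ ≃+* ℤ) (Ideal.span {(ℓ : ℤ)})
  isPrime := by
    have hp : (Ideal.span {(ℓ : ℤ)}).IsPrime :=
      (Ideal.span_singleton_prime (by exact_mod_cast hl.ne_zero)).mpr
        (Nat.prime_iff_prime_int.mp hl)
    exact Ideal.IsPrime.comap _
  ne_bot := by
    intro h
    have hmem : (Rat.ringOfIntegersEquiv.symm (ℓ : ℤ))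
        ∈ Ideal.comap (Rat.ringOfIntegersEquiv : 𝓞 ℚ ≃+* ℤ) (Ideal.span {(ℓ : ℤ)}) := by
      rw [Ideal.mem_comap]
      simp [Ideal.mem_span_singleton]
    rw [h] at hmem
    rw [Ideal.mem_bot] at hmem
    have : (ℓ : ℤ) = 0 := by
      have := congrArg (Rat.ringOfIntegersEquiv : 𝓞 ℚ ≃+* ℤ) hmem
      simpa using this
    exact_mod_cast hl.ne_zero (by exact_mod_cast this)

lemma mem_placeOf_natCast (ℓ : ℕ) (hl : ℓ.Prime) (k : ℕ) :
    ((k : 𝓞 ℚ) ∈ (placeOf ℓ hl).asIdeal) ↔ (ℓ ∣ k) := by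
  rw [placeOf, Ideal.mem_comap, Ideal.mem_span_singleton, map_natCast]
  exact_mod_cast Int.natCast_dvd_natCast

lemma valuation_natCast_le_one (v : NFPlace ℚ) (k : ℕ) :
    v.valuation ℚ ((k : ℚ)) ≤ 1 := by
  have h : ((k : ℚ)) = algebraMap (𝓞 ℚ) ℚ ((k : 𝓞 ℚ)) := by simp
  rw [h, HeightOneSpectrum.valuation_of_algebraMap, HeightOneSpectrum.intValuation_apply]
  exact HeightOneSpectrum.intValuation_le_one v _

lemma valuation_natCast_lt_one_iff (ℓ : ℕ) (hl : ℓ.Prime) (k : ℕ) :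
    (placeOf ℓ hl).valuation ℚ ((k : ℚ)) < 1 ↔ ℓ ∣ k := by
  have h : ((k : ℚ)) = algebraMap (𝓞 ℚ) ℚ ((k : 𝓞 ℚ)) := by simp
  rw [h, HeightOneSpectrum.valuation_of_algebraMap, 
    HeightOneSpectrum.intValuation_lt_one_iff_dvd, Ideal.dvd_span_singleton,
    mem_placeOf_natCast]

lemma valuation_natCast_eq_one_iff (ℓ : ℕ) (hl : ℓ.Prime) (k : ℕ) :
    (placeOf ℓ hl).valuation ℚ ((k : ℚ)) = 1 ↔ ¬ ℓ ∣ k := by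
  constructor
  · intro h hdvd
    exact absurd h (ne_of_lt ((valuation_natCast_lt_one_iff ℓ hl k).mpr hdvd))
  · intro h
    rcases lt_or_eq_of_le (valuation_natCast_le_one (placeOf ℓ hl) k) with h' | h'
    · exact absurd ((valuation_natCast_lt_one_iff ℓ hl k).mp h') h
    · exact h'

lemma eq_one_of_mul_eq_one {α : Type*} [LinearOrderedCommMonoidWithZero α]
    {x y : α} (hx : x ≤ 1) (hy : y ≤ 1) (h : x * y = 1) : x = 1 ∧ y = 1 := by
  constructor
  · refine le_antisymm hx ?_
    calc (1 : α) = x * y := h.symm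
    _ ≤ x * 1 := mul_le_mul_right hy x
    _ = x := mul_one x
  · refine le_antisymm hy ?_
    calc (1 : α) = x * y := h.symm
    _ = y * x := mul_comm x y
    _ ≤ y * 1 := mul_le_mul_right hx y
    _ = y := mul_one y

end AuxRat

section AuxFamily

/-- The block-swap involution of `Fin (d + d)`. -/
def flipFun (d : ℕ) (i : Fin (d + d)) : Fin (d + d) :=
  if h : (i : ℕ) < d then ⟨(i : ℕ) + d, by omega⟩
  else ⟨(i : ℕ) - d, by have := i.isLt; omega⟩

lemma flipFun_invol (d : ℕ) : Function.Involutive (flipFun d) := by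
  intro i
  have hi := i.isLt
  unfold flipFun
  by_cases h : (i : ℕ) < d
  · rw [dif_pos h]
    rw [dif_neg (by simp)]
    apply Fin.ext
    simp
  · rw [dif_neg h]
    rw [dif_pos (by simp; omega)]
    apply Fin.ext
    simp
    omega

def flipPerm (d : ℕ) : Equiv.Perm (Fin (d + d)) :=
  Function.Involutive.toPerm _ (flipFun_invol d)

lemma sylvester_eq_permMatrix (d : ℕ) (hd : 0 < d) :
    ProjLine.sylvester d d (C (1 : ℚ)) (X ^ d) = Equiv.Perm.permMatrix ℚ (flipPerm d) := by
  ext i j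
  have hi := i.isLt
  have hj := j.isLt
  rw [ProjLine.sylvester, Matrix.of_apply]
  rw [Equiv.Perm.permMatrix, PEquiv.toMatrix_apply, Equiv.toPEquiv_apply]
  have hperm : ((flipPerm d) i : ℕ) = if (i : ℕ) < d then (i : ℕ) + d else (i : ℕ) - d := by
    rw [flipPerm, Function.Involutive.coe_toPerm]
    unfold flipFun
    by_cases h : (i : ℕ) < d
    · rw [dif_pos h, if_pos h]
    · rw [dif_neg h, if_neg h]
  have hmem : (j ∈ (some ((flipPerm d) i) : Option (Fin (d + d))))
      ↔ ((j : ℕ) = ((flipPerm d) i : ℕ)) := by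
    rw [Option.mem_def, Option.some.injEq]
    constructor
    · intro h; rw [h]
    · intro h; exact Fin.ext h.symm
  by_cases h : (i : ℕ) < d
  · rw [if_pos h]
    rw [hperm, if_pos h] at hmem
    by_cases hcond : (i : ℕ) ≤ (j : ℕ) ∧ (j : ℕ) ≤ (i : ℕ) + d
    · rw [if_pos hcond, Polynomial.coeff_C]
      by_cases hz : d + (i : ℕ) - (j : ℕ) = 0
      · rw [if_pos hz, if_pos (by rw [hmem]; omega)]
      · rw [if_neg hz, if_neg (by rw [hmem]; omega)]
    · rw [if_neg hcond, if_neg (by rw [hmem]; omega)]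
  · rw [if_neg h]
    rw [hperm, if_neg h] at hmem
    by_cases hcond : (i : ℕ) - d ≤ (j : ℕ) ∧ (j : ℕ) ≤ (i : ℕ) - d + d
    · rw [if_pos hcond, Polynomial.coeff_X_pow]
      by_cases hz : d + ((i : ℕ) - d) - (j : ℕ) = d
      · rw [if_pos hz, if_pos (by rw [hmem]; omega)]
      · rw [if_neg hz, if_neg (by rw [hmem]; omega)]
    · rw [if_neg hcond, if_neg (by rw [hmem]; omega)]

lemma resultant_pm_one (d : ℕ) (hd : 0 < d) :
    ProjLine.resultant d d (C (1 : ℚ)) (X ^ d) = 1 ∨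
      ProjLine.resultant d d (C (1 : ℚ)) (X ^ d) = -1 := by
  rw [ProjLine.resultant, sylvester_eq_permMatrix d hd, Matrix.det_permutation]
  rcases Int.units_eq_one_or (Equiv.Perm.sign (flipPerm d)) with h | h <;> rw [h]
  · left; norm_num
  · right; norm_num

/-- The basic family: `f_u(x) = u^(d+1) / x^d` with `Y = X = {0, ∞}`. -/
def trip (d : ℕ) (ℓ : ℕ) : DynTriple ℚ :=
  ⟨C ((ℓ : ℚ) ^ (d + 1)), X ^ d,
    {(some 0 : ProjLine QBar), none}, {(some 0 : ProjLine QBar), none}⟩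

lemma fe_base (d : ℕ) (hd : d ≠ 0) (u : ℚ) (hu : u ≠ 0) (P : ProjLine ℚ) :
    ProjLine.mobius !![u, 0; 0, 1] (ProjLine.eval d (C 1) (X ^ d) P)
      = ProjLine.eval d (C (u ^ (d + 1))) (X ^ d) (ProjLine.mobius !![u, 0; 0, 1] P) := by
  have e00 : (!![u, 0; 0, 1] : Matrix (Fin 2) (Fin 2) ℚ) 0 0 = u := rfl
  have e01 : (!![u, 0; 0, 1] : Matrix (Fin 2) (Fin 2) ℚ) 0 1 = 0 := rfl
  have e10 : (!![u, 0; 0, 1] : Matrix (Fin 2) (Fin 2) ℚ) 1 0 = 0 := rfl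
  have e11 : (!![u, 0; 0, 1] : Matrix (Fin 2) (Fin 2) ℚ) 1 1 = 1 := rfl
  cases P with
  | none =>
    rw [eval_powmap_none d hd, mobius_some, mobius_none, e00, e01, e10, e11]
    rw [if_neg (by norm_num), if_pos rfl, eval_powmap_none d hd]
    norm_num
  | some x =>
    by_cases hx : x = 0
    · subst hx
      rw [eval_powmap_some d hd, if_pos rfl, mobius_none, e10,
        if_pos rfl, mobius_some, e00, e01, e10, e11]
      rw [if_neg (by norm_num)]
      rw [eval_powmap_some d hd]
      rw [if_pos (by norm_num)]
    · rw [eval_powmap_some d hd, if_neg hx, mobius_some, mobius_some,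
        e00, e01, e10, e11]
      rw [if_neg (by norm_num), if_neg (by norm_num)]
      rw [eval_powmap_some d hd]
      rw [if_neg (by simpa using ⟨hu, hx⟩)]
      congr 1
      field_simp
      ring

lemma trip_Y_eq_X (d ℓ : ℕ) : (trip d ℓ).Y = (trip d ℓ).X := rfl

lemma trip_p (d ℓ : ℕ) : (trip d ℓ).p = C ((ℓ : ℚ) ^ (d + 1)) := rfl
lemma trip_q (d ℓ : ℕ) : (trip d ℓ).q = X ^ d := rfl
lemma trip_Y (d ℓ : ℕ) : (trip d ℓ).Y = {(some 0 : ProjLine QBar), none} := rfl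
lemma trip_X (d ℓ : ℕ) : (trip d ℓ).X = {(some 0 : ProjLine QBar), none} := rfl

lemma trip_memGR (d : ℕ) (hd : 2 ≤ d) (S : Set (NFPlace ℚ)) (ℓ : ℕ) (hl : ℓ.Prime) :
    MemGR S d (2 * d) (trip d ℓ) := by
  have hd0 : d ≠ 0 := by omega
  have hb : ((ℓ : ℚ) ^ (d + 1)) ≠ 0 := by
    apply pow_ne_zero
    exact_mod_cast hl.ne_zero
  have hbbar : ι ((ℓ : ℚ) ^ (d + 1)) ≠ 0 := fun h => hb (ι_inj (by rwa [map_zero]))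
  have hpbar : polyBar (trip d ℓ).p = C (ι ((ℓ : ℚ) ^ (d + 1))) := polyBar_C _
  have hqbar : polyBar (trip d ℓ).q = (X ^ d : QBar[X]) := polyBar_Xpow d
  have heval0 : ProjLine.eval d (polyBar (trip d ℓ).p) (polyBar (trip d ℓ).q)
      (some 0) = none := by
    rw [hpbar, hqbar, eval_powmap_some d hd0, if_pos rfl]
  have hevalinf : ProjLine.eval d (polyBar (trip d ℓ).p) (polyBar (trip d ℓ).q)
      none = some 0 := by
    rw [hpbar, hqbar, eval_powmap_none d hd0]
  constructor
  · refine ⟨?_, ?_, ?_, ?_, ?_, ?_⟩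
    · -- IsRatMapOfDeg
      rw [trip_p, trip_q]
      refine ⟨⟨C (((ℓ : ℚ) ^ (d + 1))⁻¹), 0, ?_⟩, ?_, ?_, Or.inr (natDegree_X_pow d)⟩
      · rw [zero_mul, add_zero, ← C_mul, inv_mul_cancel₀ hb, C_1]
      · rw [natDegree_C]; omega
      · rw [natDegree_X_pow]
    · exact (Set.finite_singleton _).insert _
    · -- X = Y ∪ f(Y)
      rw [trip_X, trip_Y, Set.image_pair, heval0, hevalinf]
      ext P
      simp only [Set.mem_insert_iff, Set.mem_singleton_iff, Set.mem_union]
      tauto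
    · -- Galois invariance
      intro σ P hP
      rcases hP with h | h
      · rw [h]; left; simp
      · rw [Set.mem_singleton_iff] at h; rw [h]; right; simp
    · -- total ramification weight
      rw [trip_Y, finsum_mem_pair (by simp : (some 0 : ProjLine QBar) ≠ none)]
      have hr1 : ProjLine.ram d (polyBar (trip d ℓ).p) (polyBar (trip d ℓ).q)
          (some 0) = d := by
        rw [ProjLine.ram, ProjLine.ramAt, hqbar, if_pos (by simp [zero_pow hd0])]
        simpa using Polynomial.rootMultiplicity_X_sub_C_pow (0 : QBar) d
      have hr2 : ProjLine.ram d (polyBar (trip d ℓ).p) (polyBar (trip d ℓ).q)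
          none = d := by
        rw [ProjLine.ram, ProjLine.ramAt, hpbar, hqbar]
        rw [reflect_C, reflect_monomial, revAt_le (le_refl d), Nat.sub_self, pow_zero]
        rw [if_neg (by norm_num)]
        have hev : ((C (ι ((ℓ : ℚ) ^ (d + 1))) * X ^ d : QBar[X]).eval 0) = 0 := by
          simp [zero_pow hd0]
        rw [hev]
        simp only [eval_one, map_one, one_mul, map_zero, zero_mul, sub_zero]
        rw [Polynomial.rootMultiplicity_mul (by
          apply mul_ne_zero
          · intro h
            rw [← C_0] at h
            exact hbbar (C_injective h)
          · exact pow_ne_zero d X_ne_zero)]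
        rw [Polynomial.rootMultiplicity_C]
        simpa using Polynomial.rootMultiplicity_X_sub_C_pow (0 : QBar) d
      rw [hr1, hr2, two_mul]
    · -- good reduction of X
      intro v hv O hO P hP Q hQ hPQ
      have hred0 : ∀ R : ProjLine QBar, R ∈ ({(some 0 : ProjLine QBar), none} : Set _) →
          (ProjLine.red O R = none ↔ R = none) := by
        intro R hR
        rcases hR with h | h
        · rw [h]
          constructor
          · intro hc
            rw [ProjLine.red, dif_pos O.zero_mem] at hc
            exact absurd hc (by simp)
          · intro hc; exact absurd hc (by simp)
        · rw [Set.mem_singleton_iff] at h; rw [h]; simp [ProjLine.red]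
      rcases hP with h1 | h1 <;> rcases hQ with h2 | h2
      · rw [h1, h2]
      · rw [Set.mem_singleton_iff] at h2
        exfalso
        rw [h2] at hPQ
        have : ProjLine.red O P = none := by rw [hPQ]; rfl
        rw [(hred0 P (Or.inl h1))] at this
        rw [h1] at this
        exact absurd this (by simp)
      · rw [Set.mem_singleton_iff] at h1
        exfalso
        rw [h1] at hPQ
        have : ProjLine.red O Q = none := by rw [← hPQ]; rfl
        rw [(hred0 Q (Or.inl h2))] at this
        rw [h2] at this
        exact absurd this (by simp)
      · rw [Set.mem_singleton_iff] at h1 h2; rw [h1, h2]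
  · -- SimpleGoodRed
    refine ⟨!![(ℓ : ℚ), 0; 0, 1], C 1, X ^ d, ?_, ?_, ?_, ?_, ?_, ?_⟩
    · rw [Matrix.det_fin_two_of]
      have : (ℓ : ℚ) ≠ 0 := by exact_mod_cast hl.ne_zero
      simpa using this
    · refine ⟨⟨1, 0, by simp⟩, ?_, ?_, Or.inr (natDegree_X_pow d)⟩
      · rw [natDegree_C]; omega
      · rw [natDegree_X_pow]
    · intro n
      rw [Polynomial.coeff_C]
      by_cases h : n = 0
      · rw [if_pos h]; exact SInteger_one
      · rw [if_neg h]; exact SInteger_zero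
    · intro n
      rw [Polynomial.coeff_X_pow]
      by_cases h : n = d
      · rw [if_pos h]; exact SInteger_one
      · rw [if_neg h]; exact SInteger_zero
    · rcases resultant_pm_one d (by omega) with h | h <;> rw [h]
      · exact SUnit_one
      · exact SUnit_neg_one
    · intro P
      exact fe_base d hd0 (ℓ : ℚ) (by exact_mod_cast hl.ne_zero) P

end AuxFamily

section AuxEquiv

lemma tripleEquiv_trans_symm (S : Set (NFPlace ℚ)) (d : ℕ) (t₁ t₂ t' : DynTriple ℚ)
    (h1 : TripleEquiv S d t₁ t') (h2 : TripleEquiv S d t₂ t') :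
    TripleEquiv S d t₁ t₂ := by
  obtain ⟨M₁, hint1, hdet1, hfe1, hY1, hX1⟩ := h1
  obtain ⟨M₂, hint2, hdet2, hfe2, hY2, hX2⟩ := h2
  have hadjint : ∀ i j, SInteger S (M₂.adjugate i j) := by
    intro i j
    rw [Matrix.adjugate_fin_two]
    fin_cases i <;> fin_cases j
    · simpa using hint2 1 1
    · simpa using SInteger.neg (hint2 0 1)
    · simpa using SInteger.neg (hint2 1 0)
    · simpa using hint2 0 0
  have hdetadj : M₂.adjugate.det = M₂.det := by
    rw [Matrix.det_adjugate]
    simp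
  have hd1 : (matBar M₁).det ≠ 0 := by
    rw [matBar_det]
    exact fun h => hdet1.1 (ι_inj (by rwa [map_zero]))
  have hd2 : (matBar M₂).det ≠ 0 := by
    rw [matBar_det]
    exact fun h => hdet2.1 (ι_inj (by rwa [map_zero]))
  have hdadj : (matBar M₂.adjugate).det ≠ 0 := by
    rw [matBar_det, hdetadj]
    exact fun h => hdet2.1 (ι_inj (by rwa [map_zero]))
  have hιdet2 : ι M₂.det ≠ 0 := fun h => hdet2.1 (ι_inj (by rwa [map_zero]))
  -- the two inversion identities
  have hinv : ∀ P, ProjLine.mobius (matBar M₂) (ProjLine.mobius (matBar M₂.adjugate) P)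
      = P := by
    intro P
    rw [← mobius_mul _ _ hd2 hdadj, ← matBar_mul, Matrix.mul_adjugate, matBar_smul_one]
    exact mobius_smul_one _ hιdet2 P
  have hinv' : ∀ P, ProjLine.mobius (matBar M₂.adjugate) (ProjLine.mobius (matBar M₂) P)
      = P := by
    intro P
    rw [← mobius_mul _ _ hdadj hd2, ← matBar_mul, Matrix.adjugate_mul, matBar_smul_one]
    exact mobius_smul_one _ hιdet2 P
  have hcomp : ∀ P, ProjLine.mobius (matBar (M₁ * M₂.adjugate)) P
      = ProjLine.mobius (matBar M₁) (ProjLine.mobius (matBar M₂.adjugate) P) := by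
    intro P
    rw [matBar_mul, mobius_mul _ _ hd1 hdadj]
  refine ⟨M₁ * M₂.adjugate, ?_, ?_, ?_, ?_, ?_⟩
  · intro i j
    have hmul : (M₁ * M₂.adjugate) i j
        = M₁ i 0 * M₂.adjugate 0 j + M₁ i 1 * M₂.adjugate 1 j := by
      simp [Matrix.mul_apply, Fin.sum_univ_two]
    rw [hmul]
    exact SInteger.add (SInteger.mul (hint1 _ _) (hadjint _ _))
      (SInteger.mul (hint1 _ _) (hadjint _ _))
  · rw [Matrix.det_mul, hdetadj]
    exact SUnit.mul hdet1 hdet2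
  · intro P
    have key : ∀ Q, ProjLine.mobius (matBar M₁) (ProjLine.mobius (matBar M₂.adjugate)
        (ProjLine.eval d (polyBar t₂.p) (polyBar t₂.q) (ProjLine.mobius (matBar M₂) Q)))
        = ProjLine.eval d (polyBar t₁.p) (polyBar t₁.q)
            (ProjLine.mobius (matBar M₁) Q) := by
      intro Q
      rw [← hfe2 Q, hinv' (ProjLine.eval d (polyBar t'.p) (polyBar t'.q) Q), hfe1 Q]
    have := key (ProjLine.mobius (matBar M₂.adjugate) P)
    rw [hinv P] at this
    rw [hcomp P, hcomp (ProjLine.eval d (polyBar t₂.p) (polyBar t₂.q) P)]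
    exact this
  · rw [← hY2, ← hY1, Set.image_image]
    rw [Set.image_congr (fun a _ => hcomp (ProjLine.mobius (matBar M₂) a))]
    apply Set.image_congr
    intro a _
    rw [hinv' a]
  · rw [← hX2, ← hX1, Set.image_image]
    rw [Set.image_congr (fun a _ => hcomp (ProjLine.mobius (matBar M₂) a))]
    apply Set.image_congr
    intro a _
    rw [hinv' a]

lemma trip_inequiv (d : ℕ) (hd : 2 ≤ d) (S : Set (NFPlace ℚ))
    (hS : S = {v : NFPlace ℚ | v.valuation ℚ ((Nat.factorial (2 * d - 2) : ℚ)) ≠ 1})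
    (ℓ m : ℕ) (hl : ℓ.Prime) (hm : m.Prime) (hne : ℓ ≠ m)
    (hlN : ¬ ℓ ∣ Nat.factorial (2 * d - 2)) :
    ¬ TripleEquiv S d (trip d ℓ) (trip d m) := by
  rintro ⟨M, hint, hdet, hfe, hY, hX⟩
  have hd0 : d ≠ 0 := by omega
  set v := placeOf ℓ hl with hv
  have hvS : v ∉ S := by
    rw [hS]
    simp only [Set.mem_setOf_eq, not_not]
    exact (valuation_natCast_eq_one_iff ℓ hl _).mpr hlN
  have hvl_lt : v.valuation ℚ ((ℓ : ℚ)) < 1 :=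
    (valuation_natCast_lt_one_iff ℓ hl ℓ).mpr dvd_rfl
  have hvm : v.valuation ℚ ((m : ℚ)) = 1 :=
    (valuation_natCast_eq_one_iff ℓ hl m).mpr
      (fun h => hne ((Nat.prime_dvd_prime_iff_eq hl hm).mp h))
  have hdet1 : v.valuation ℚ M.det = 1 := hdet.2 v hvS
  have hdetne : M.det ≠ 0 := hdet.1
  -- nonvanishing of the base constants
  have hmQ : ((m : ℚ) ^ (d + 1)) ≠ 0 := pow_ne_zero _ (by exact_mod_cast hm.ne_zero)
  have hlQ : ((ℓ : ℚ) ^ (d + 1)) ≠ 0 := pow_ne_zero _ (by exact_mod_cast hl.ne_zero)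
  have hιm : ι ((m : ℚ) ^ (d + 1)) ≠ 0 := fun h => hmQ (ι_inj (by rwa [map_zero]))
  -- value of the degree-d map of `trip d m` at 1
  have h1 : ProjLine.eval d (polyBar (trip d m).p) (polyBar (trip d m).q) (some 1)
      = some (ι ((m : ℚ) ^ (d + 1))) := by
    rw [trip_p, trip_q, polyBar_C, polyBar_Xpow, eval_powmap_some d hd0,
      if_neg one_ne_zero, one_pow, div_one]
  -- the mobius images of 0 and ∞
  rw [trip_X, trip_X, Set.image_pair] at hX
  have hmem0 : ProjLine.mobius (matBar M) (some 0)
      ∈ ({(some 0 : ProjLine QBar), none} : Set _) := by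
    rw [← hX]; left; rfl
  have hmeminf : (none : ProjLine QBar) ∈
      ({ProjLine.mobius (matBar M) (some 0), ProjLine.mobius (matBar M) none} : Set _) := by
    rw [hX]; right; rfl
  have hmem0' : (some 0 : ProjLine QBar) ∈
      ({ProjLine.mobius (matBar M) (some 0), ProjLine.mobius (matBar M) none} : Set _) := by
    rw [hX]; left; rfl
  have hfe1 := hfe (some 1)
  -- final contradiction once we know `1 = v(ℓ)^(d+1)`
  have hfinal : ¬ ((1 : WithZero (Multiplicative ℤ)) = (v.valuation ℚ ((ℓ : ℚ))) ^ (d + 1)) := by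
    intro hcontra
    have hlt : (v.valuation ℚ ((ℓ : ℚ))) ^ (d + 1) < 1 := by
      calc (v.valuation ℚ ((ℓ : ℚ))) ^ (d + 1)
          = (v.valuation ℚ ((ℓ : ℚ))) ^ d * v.valuation ℚ ((ℓ : ℚ)) := pow_succ _ d
      _ ≤ 1 * v.valuation ℚ ((ℓ : ℚ)) := mul_le_mul_left (pow_le_one' (le_of_lt hvl_lt) d) _
      _ = v.valuation ℚ ((ℓ : ℚ)) := one_mul _
      _ < 1 := hvl_lt
    exact (ne_of_lt hlt) hcontra.symm
  by_cases he : M 1 1 = 0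
  · -- Case B : M fixes neither 0 nor ∞, it swaps them
    have hφ0 : ProjLine.mobius (matBar M) (some 0) = none := by
      rw [mobius_some]
      rw [if_pos (by simp [matBar_apply, he])]
    have hφinf : ProjLine.mobius (matBar M) none = some 0 := by
      rcases hmem0' with h | h
      · rw [hφ0] at h; exact absurd h (by simp)
      · rw [Set.mem_singleton_iff] at h; exact h.symm
    have hcne : M 1 0 ≠ 0 := by
      intro hc
      rw [mobius_none, if_pos (by simp [matBar_apply, hc])] at hφinf
      exact absurd hφinf (by simp)
    have hιc : ι (M 1 0) ≠ 0 := fun h => hcne (ι_inj (by rwa [map_zero]))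
    have ha0 : M 0 0 = 0 := by
      rw [mobius_none, if_neg (by simpa [matBar_apply] using hιc)] at hφinf
      have := Option.some.inj hφinf
      rw [_root_.div_eq_zero_iff] at this
      rcases this with h | h
      · exact ι_inj (by rwa [map_zero])
      · exact absurd h hιc
    have hdetv : M 0 1 * M 1 0 = -M.det := by
      rw [Matrix.det_fin_two, ha0, he]; ring
    have hprod : v.valuation ℚ (M 0 1) * v.valuation ℚ (M 1 0) = 1 := by
      rw [← map_mul, hdetv, Valuation.map_neg, hdet1]
    obtain ⟨hvb, hvc⟩ := eq_one_of_mul_eq_one (hint 0 1 v hvS) (hint 1 0 v hvS) hprod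
    have hbne : M 0 1 ≠ 0 := fun h => by rw [h, map_zero] at hvb; exact zero_ne_one hvb
    have hιb : ι (M 0 1) ≠ 0 := fun h => hbne (ι_inj (by rwa [map_zero]))
    have hmob : ∀ z : QBar, z ≠ 0 → ProjLine.mobius (matBar M) (some z)
        = some (ι (M 0 1) / (ι (M 1 0) * z)) := by
      intro z hz
      rw [mobius_some]
      simp only [matBar_apply]
      simp only [he, ha0, map_zero, add_zero, zero_mul, zero_add]
      rw [if_neg (mul_ne_zero hιc hz)]
    rw [h1, hmob _ hιm, hmob 1 one_ne_zero, mul_one] at hfe1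
    have hx : ι (M 0 1) / ι (M 1 0) ≠ 0 := div_ne_zero hιb hιc
    rw [trip_p, trip_q, polyBar_C, polyBar_Xpow, eval_powmap_some d hd0,
      if_neg hx] at hfe1
    have E := Option.some.inj hfe1
    rw [div_pow, div_div_eq_mul_div, div_eq_div_iff (mul_ne_zero hιc hιm)
      (pow_ne_zero d hιb)] at E
    simp only [map_pow] at E
    have hQ : (M 0 1) ^ (d + 1) = (ℓ : ℚ) ^ (d + 1) * (m : ℚ) ^ (d + 1) * (M 1 0) ^ (d + 1) := by
      apply ι_inj
      simp only [map_mul, map_pow]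
      linear_combination E
    have hval := congrArg (v.valuation ℚ) hQ
    simp only [map_mul, map_pow, hvb, hvc, hvm, one_pow, mul_one, one_mul] at hval
    exact hfinal (by simpa using hval)
  · -- Case A : M fixes 0 and ∞
    have hιe : ι (M 1 1) ≠ 0 := fun h => he (ι_inj (by rwa [map_zero]))
    have hφ0 : ProjLine.mobius (matBar M) (some 0)
        = some (ι (M 0 1) / ι (M 1 1)) := by
      rw [mobius_some]
      rw [if_neg (by simpa [matBar_apply] using hιe)]
      simp [matBar_apply]
    have hb0 : M 0 1 = 0 := by
      rcases hmem0 with h | h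
      · rw [hφ0] at h
        have := Option.some.inj h
        rw [_root_.div_eq_zero_iff] at this
        rcases this with h' | h'
        · exact ι_inj (by rwa [map_zero])
        · exact absurd h' hιe
      · rw [Set.mem_singleton_iff, hφ0] at h
        exact absurd h (by simp)
    have hc0 : M 1 0 = 0 := by
      by_contra hc
      have hιc : ι (M 1 0) ≠ 0 := fun h => hc (ι_inj (by rwa [map_zero]))
      rcases hmeminf with h | h
      · rw [hφ0] at h; exact absurd h.symm (by simp)
      · rw [Set.mem_singleton_iff, mobius_none,
          if_neg (by simpa [matBar_apply] using hιc)] at h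
        exact absurd h (by simp)
    have hdetv : M.det = M 0 0 * M 1 1 := by
      rw [Matrix.det_fin_two, hb0, hc0]; ring
    have hprod : v.valuation ℚ (M 0 0) * v.valuation ℚ (M 1 1) = 1 := by
      rw [← map_mul, ← hdetv, hdet1]
    obtain ⟨hva, hve⟩ := eq_one_of_mul_eq_one (hint 0 0 v hvS) (hint 1 1 v hvS) hprod
    have hane : M 0 0 ≠ 0 := fun h => by rw [h, map_zero] at hva; exact zero_ne_one hva
    have hιa : ι (M 0 0) ≠ 0 := fun h => hane (ι_inj (by rwa [map_zero]))
    have hmob : ∀ z : QBar, ProjLine.mobius (matBar M) (some z)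
        = some (ι (M 0 0) * z / ι (M 1 1)) := by
      intro z
      rw [mobius_some]
      simp only [matBar_apply]
      simp only [hb0, hc0, map_zero, zero_mul, zero_add, add_zero]
      rw [if_neg hιe]
    rw [h1, hmob, hmob 1, mul_one] at hfe1
    have hx : ι (M 0 0) / ι (M 1 1) ≠ 0 := div_ne_zero hιa hιe
    rw [trip_p, trip_q, polyBar_C, polyBar_Xpow, eval_powmap_some d hd0,
      if_neg hx] at hfe1
    have E := Option.some.inj hfe1
    rw [div_pow, div_div_eq_mul_div, div_eq_div_iff hιe (pow_ne_zero d hιa)] at E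
    simp only [map_pow] at E
    have hQ : (M 0 0) ^ (d + 1) * (m : ℚ) ^ (d + 1)
        = (ℓ : ℚ) ^ (d + 1) * (M 1 1) ^ (d + 1) := by
      apply ι_inj
      simp only [map_mul, map_pow]
      linear_combination E
    have hval := congrArg (v.valuation ℚ) hQ
    simp only [map_mul, map_pow, hva, hve, hvm, one_pow, mul_one, one_mul] at hval
    exact hfinal (by simpa using hval)

end AuxEquiv

/-- **Dynamical Shafarevich finiteness fails for weight 2d** (Theorem 1.3(b)).
Let `S` be the set of rational primes dividing `(2d-2)!`.  Then
`GR¹_d[2d](ℚ,S)/PGL₂(ℤ_S)` is infinite; indeed there are infinitely many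
`PGL₂(ℤ_S)`-equivalence classes of preperiodic triples `(f, X, X)` in
`GR¹_d[2d](ℚ,S)`. -/
theorem dynamical_shafarevich_fails_weight_two_d
    (d : ℕ) (hd : 2 ≤ d)
    (S : Set (NFPlace ℚ))
    (hS : S = {v : NFPlace ℚ | v.valuation ℚ ((Nat.factorial (2 * d - 2) : ℚ)) ≠ 1}) :
    (¬ ∃ T : Set (DynTriple ℚ), T.Finite ∧
        ∀ t : DynTriple ℚ, MemGR S d (2 * d) t → ∃ t' ∈ T, TripleEquiv S d t t') ∧
    (¬ ∃ T : Set (DynTriple ℚ), T.Finite ∧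
        ∀ t : DynTriple ℚ, MemGR S d (2 * d) t ∧ t.Y = t.X →
          ∃ t' ∈ T, TripleEquiv S d t t') := by
  have main : ∀ T : Set (DynTriple ℚ), T.Finite →
      ¬ (∀ ℓ : ℕ, ℓ.Prime → ¬ ℓ ∣ Nat.factorial (2 * d - 2) →
          ∃ t' ∈ T, TripleEquiv S d (trip d ℓ) t') := by
    intro T hT hcov
    set P : Set ℕ := {ℓ | ℓ.Prime ∧ ¬ ℓ ∣ Nat.factorial (2 * d - 2)} with hP
    have hPinf : P.Infinite := by
      have h2 : {ℓ : ℕ | ℓ ∣ Nat.factorial (2 * d - 2)}.Finite := by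
        apply Set.Finite.subset (Set.finite_Iic (Nat.factorial (2 * d - 2)))
        intro x hx
        exact Nat.le_of_dvd (Nat.factorial_pos _) hx
      have heq : P = {ℓ : ℕ | ℓ.Prime} \ {ℓ : ℕ | ℓ ∣ Nat.factorial (2 * d - 2)} := by
        ext x
        simp [hP, Set.mem_diff]
      rw [heq]
      exact Nat.infinite_setOf_prime.diff h2
    have hgex : ∀ ℓ : ℕ, ∃ t' : DynTriple ℚ, ℓ ∈ P →
        t' ∈ T ∧ TripleEquiv S d (trip d ℓ) t' := by
      intro ℓ
      by_cases h : ℓ ∈ P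
      · obtain ⟨t', ht'T, ht'e⟩ := hcov ℓ h.1 h.2
        exact ⟨t', fun _ => ⟨ht'T, ht'e⟩⟩
      · exact ⟨trip d 0, fun hc => absurd hc h⟩
    choose g hg using hgex
    obtain ⟨x, hx, y, hy, hxy, hgxy⟩ := hPinf.exists_ne_map_eq_of_mapsTo
      (f := g) (fun ℓ hℓ => (hg ℓ hℓ).1) hT
    have e1 : TripleEquiv S d (trip d x) (g x) := (hg x hx).2
    have e2 : TripleEquiv S d (trip d y) (g x) := by
      rw [hgxy]; exact (hg y hy).2
    have hequiv : TripleEquiv S d (trip d x) (trip d y) :=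
      tripleEquiv_trans_symm S d (trip d x) (trip d y) (g x) e1 e2
    exact trip_inequiv d hd S hS x y hx.1 hy.1 hxy hx.2 hequiv
  constructor
  · rintro ⟨T, hT, hcov⟩
    exact main T hT (fun ℓ hp hnd => hcov (trip d ℓ) (trip_memGR d hd S ℓ hp))
  · rintro ⟨T, hT, hcov⟩
    exact main T hT (fun ℓ hp hnd =>
      hcov (trip d ℓ) ⟨trip_memGR d hd S ℓ hp, trip_Y_eq_X d ℓ⟩)

end
end

section
/- Let R be a discrete valuation ring with maximal ideal 𝔓 and fraction field K. Let P_1, P_2, P_3 ∈ P^1(K) be points whose reductions modulo 𝔓 are pairwise distinct, and let Q_1, Q_2, Q_3 ∈ P^1(K) also be points with pairwise distinct reductions modulo 𝔓. Let φ ∈ PGL_2(K) be the unique linear fractional transformation satisfying φ(P_i) = Q_i for 1 ≤ i ≤ 3. Then φ ∈ PGL_2(R), i.e., φ has good reduction modulo 𝔓. -/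
open Polynomial
open scoped Classical

noncomputable section
open Polynomial

namespace Sub34

variable {F : Type*} [Field F]

/-- The point of `P¹(F)` with homogeneous coordinates `[u : v]`. -/
def mk (u v : F) : ProjLine F := if v = 0 then none else some (u / v)

lemma mk_zero (u : F) : mk u 0 = none := if_pos rfl

lemma mk_of_ne {v : F} (hv : v ≠ 0) (u : F) : mk u v = some (u / v) := if_neg hv

lemma mk_eq_mk {u v u' v' : F} (h : u ≠ 0 ∨ v ≠ 0) (h' : u' ≠ 0 ∨ v' ≠ 0) :
    mk u v = mk u' v' ↔ u * v' = u' * v := by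
  by_cases hv : v = 0 <;> by_cases hv' : v' = 0
  · subst hv; subst hv'; simp [mk_zero]
  · have hu : u ≠ 0 := h.resolve_right (by simp [hv])
    subst hv
    rw [mk_zero, mk_of_ne hv']
    simp [mul_eq_zero, hu, hv']
  · have hu' : u' ≠ 0 := h'.resolve_right (by simp [hv'])
    subst hv'
    rw [mk_zero, mk_of_ne hv]
    constructor
    · intro hh; exact absurd hh (by simp)
    · intro hh
      rw [mul_zero] at hh
      exact absurd hh.symm (mul_ne_zero hu' hv)
  · rw [mk_of_ne hv, mk_of_ne hv']
    simp only [Option.some.injEq]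
    rw [div_eq_div_iff hv hv']

lemma mobius_mk (M : Matrix (Fin 2) (Fin 2) F) {u v : F} (h : u ≠ 0 ∨ v ≠ 0) :
    ProjLine.mobius M (mk u v) = mk (M 0 0 * u + M 0 1 * v) (M 1 0 * u + M 1 1 * v) := by
  by_cases hv : v = 0
  · subst hv
    have hu : u ≠ 0 := h.resolve_right (by simp)
    rw [mk_zero]
    show (if M 1 0 = 0 then none else some (M 0 0 / M 1 0)) = _
    by_cases hc : M 1 0 = 0
    · rw [if_pos hc]
      have hz : M 1 0 * u + M 1 1 * 0 = 0 := by rw [hc]; ring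
      rw [show M 1 0 * u + M 1 1 * 0 = 0 from hz, mk_zero]
    · rw [if_neg hc]
      have hne : M 1 0 * u + M 1 1 * 0 ≠ 0 := by
        rw [mul_zero, add_zero]; exact mul_ne_zero hc hu
      rw [mk_of_ne hne]
      congr 1
      rw [mul_zero, add_zero, mul_zero, add_zero, mul_div_mul_right _ _ hu]
  · rw [mk_of_ne hv]
    show (if M 1 0 * (u / v) + M 1 1 = 0 then none
      else some ((M 0 0 * (u / v) + M 0 1) / (M 1 0 * (u / v) + M 1 1))) = _
    have key : M 1 0 * (u / v) + M 1 1 = (M 1 0 * u + M 1 1 * v) / v := by field_simp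
    have key2 : M 0 0 * (u / v) + M 0 1 = (M 0 0 * u + M 0 1 * v) / v := by field_simp
    rw [key, key2]
    have hzi : (M 1 0 * u + M 1 1 * v) / v = 0 ↔ M 1 0 * u + M 1 1 * v = 0 := by
      rw [_root_.div_eq_zero_iff]
      exact or_iff_left hv
    by_cases hz : M 1 0 * u + M 1 1 * v = 0
    · rw [if_pos (hzi.mpr hz), show M 1 0 * u + M 1 1 * v = 0 from hz, mk_zero]
    · rw [if_neg (fun hh => hz (hzi.mp hh)), mk_of_ne hz]
      congr 1
      exact div_div_div_cancel_right₀ hv _ _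

variable {L : Type*} [Field L] (O : ValuationSubring L)

lemma mobius_smul {s : L} (hs : s ≠ 0) (M : Matrix (Fin 2) (Fin 2) L) (x : ProjLine L) :
    ProjLine.mobius (s • M) x = ProjLine.mobius M x := by
  cases x with
  | none =>
    show (if (s • M) 1 0 = 0 then none else some ((s • M) 0 0 / (s • M) 1 0))
      = (if M 1 0 = 0 then none else some (M 0 0 / M 1 0))
    simp only [Matrix.smul_apply, smul_eq_mul]
    by_cases hc : M 1 0 = 0
    · rw [if_pos (by rw [hc, mul_zero]), if_pos hc]
    · rw [if_neg (mul_ne_zero hs hc), if_neg hc, mul_div_mul_left _ _ hs]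
  | some t =>
    show (if (s • M) 1 0 * t + (s • M) 1 1 = 0 then none
        else some (((s • M) 0 0 * t + (s • M) 0 1) / ((s • M) 1 0 * t + (s • M) 1 1)))
      = (if M 1 0 * t + M 1 1 = 0 then none
        else some ((M 0 0 * t + M 0 1) / (M 1 0 * t + M 1 1)))
    simp only [Matrix.smul_apply, smul_eq_mul]
    have e1 : s * M 1 0 * t + s * M 1 1 = s * (M 1 0 * t + M 1 1) := by ring
    have e2 : s * M 0 0 * t + s * M 0 1 = s * (M 0 0 * t + M 0 1) := by ring
    rw [e1, e2]
    by_cases hz : M 1 0 * t + M 1 1 = 0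
    · rw [if_pos (by rw [hz, mul_zero]), if_pos hz]
    · rw [if_neg (mul_ne_zero hs hz), if_neg hz, mul_div_mul_left _ _ hs]

lemma red_mk (u v : ↥O)
    (h : IsLocalRing.residue ↥O u ≠ 0 ∨ IsLocalRing.residue ↥O v ≠ 0) :
    ProjLine.red O (mk (u : L) (v : L)) =
      mk (IsLocalRing.residue ↥O u) (IsLocalRing.residue ↥O v) := by
  by_cases hv : IsLocalRing.residue ↥O v = 0
  · have hu : IsLocalRing.residue ↥O u ≠ 0 := h.resolve_right (by simp [hv])
    rw [hv, mk_zero]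
    by_cases hv0 : (v : L) = 0
    · rw [hv0, mk_zero]; rfl
    · rw [mk_of_ne hv0]
      show (if h : (u : L) / (v : L) ∈ O then
          some (IsLocalRing.residue ↥O ⟨(u : L) / (v : L), h⟩) else none) = none
      rw [dif_neg]
      intro hmem
      apply hu
      have he : u = ⟨(u : L) / (v : L), hmem⟩ * v := by
        ext
        push_cast
        exact (div_mul_cancel₀ (u : L) hv0).symm
      rw [he, map_mul, hv, mul_zero]
  · -- v is a unit in O
    have hvu : IsUnit v := by
      by_contra hnu
      exact hv ((IsLocalRing.residue_eq_zero_iff _).mpr hnu)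
    obtain ⟨w, hw⟩ := hvu.exists_right_inv
    have hw' : (v : L) * (w : L) = 1 := by exact_mod_cast congrArg (fun z : ↥O => (z : L)) hw
    have hv0 : (v : L) ≠ 0 := fun h0 => by simp [h0] at hw'
    have hmemval : (u : L) / (v : L) = ((u * w : ↥O) : L) := by
      push_cast
      field_simp
      linear_combination (u : L) * hw'.symm
    have hmem : (u : L) / (v : L) ∈ O := hmemval ▸ (u * w).2
    rw [mk_of_ne hv0]
    show (if h : (u : L) / (v : L) ∈ O then
        some (IsLocalRing.residue ↥O ⟨(u : L) / (v : L), h⟩) else none) = _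
    rw [dif_pos hmem, mk_of_ne hv]
    congr 1
    have hsub : (⟨(u : L) / (v : L), hmem⟩ : ↥O) = u * w := by
      ext
      exact hmemval
    rw [hsub, map_mul]
    have hw2 : IsLocalRing.residue ↥O v * IsLocalRing.residue ↥O w = 1 := by
      rw [← map_mul, hw, map_one]
    field_simp
    linear_combination (IsLocalRing.residue ↥O u) * hw2

lemma exists_rep (x : ProjLine L) :
    ∃ u v : ↥O, (IsLocalRing.residue ↥O u ≠ 0 ∨ IsLocalRing.residue ↥O v ≠ 0) ∧
      x = mk (u : L) (v : L) := by
  have h1 : IsLocalRing.residue ↥O 1 ≠ 0 := by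
    rw [map_one]; exact one_ne_zero
  cases x with
  | none =>
    refine ⟨1, 0, Or.inl h1, ?_⟩
    rw [show ((0 : ↥O) : L) = 0 from rfl, mk_zero]
  | some t =>
    by_cases ht : t ∈ O
    · refine ⟨⟨t, ht⟩, 1, Or.inr h1, ?_⟩
      rw [show ((1 : ↥O) : L) = 1 from rfl, mk_of_ne one_ne_zero]
      simp
    · have ht0 : t ≠ 0 := fun h => ht (h ▸ O.zero_mem)
      have hti : t⁻¹ ∈ O := (O.mem_or_inv_mem t).resolve_left ht
      refine ⟨1, ⟨t⁻¹, hti⟩, Or.inl h1, ?_⟩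
      rw [show ((⟨t⁻¹, hti⟩ : ↥O) : L) = t⁻¹ from rfl,
        mk_of_ne (inv_ne_zero ht0), show ((1 : ↥O) : L) = 1 from rfl, one_div, inv_inv]

end Sub34

set_option maxHeartbeats 1000000 in
/-- **Sublemma 3.4.** Let `O` be a discrete valuation ring, realized as a valuation
subring of its fraction field `L`.  If `P₁,P₂,P₃ ∈ P¹(L)` have pairwise distinct
reductions, `Q₁,Q₂,Q₃ ∈ P¹(L)` have pairwise distinct reductions, and
`φ ∈ PGL₂(L)` satisfies `φ(Pᵢ) = Qᵢ` for `i = 1,2,3`, then `φ ∈ PGL₂(O)`, i.e. `φ` is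
induced by a matrix over `O` with unit determinant. -/
theorem mobius_good_reduction_of_three_points
    (L : Type*) [Field L] (O : ValuationSubring L) [IsDiscreteValuationRing ↥O]
    (P Q : Fin 3 → ProjLine L)
    (hP : ∀ i j, i ≠ j → ProjLine.red O (P i) ≠ ProjLine.red O (P j))
    (hQ : ∀ i j, i ≠ j → ProjLine.red O (Q i) ≠ ProjLine.red O (Q j))
    (M : Matrix (Fin 2) (Fin 2) L) (hM : M.det ≠ 0)
    (hmap : ∀ i, ProjLine.mobius M (P i) = Q i) :
    ∃ N : Matrix (Fin 2) (Fin 2) ↥O, IsUnit N.det ∧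
      ∀ x : ProjLine L,
        ProjLine.mobius (N.map (fun r : ↥O => (r : L))) x = ProjLine.mobius M x := by
  classical
  -- pick the entry of maximal valuation
  obtain ⟨⟨i0, j0⟩, -, hmax⟩ := Finset.exists_max_image (Finset.univ : Finset (Fin 2 × Fin 2))
      (fun ij => O.valuation (M ij.1 ij.2)) ⟨(0, 0), Finset.mem_univ _⟩
  set s := M i0 j0 with hs
  have hM' : ∃ i j, M i j ≠ 0 := by
    by_contra h
    push_neg at h
    apply hM
    rw [Matrix.det_fin_two, h, h, h, h]
    ring
  have hs0 : s ≠ 0 := by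
    intro h0
    obtain ⟨i, j, hij⟩ := hM'
    have h2 := hmax (i, j) (Finset.mem_univ _)
    simp only [← hs, h0, map_zero, le_zero_iff] at h2
    exact hij (O.valuation.zero_iff.mp h2)
  have hvs : O.valuation s ≠ 0 := fun h => hs0 (O.valuation.zero_iff.mp h)
  have hmem : ∀ i j, s⁻¹ * M i j ∈ O := by
    intro i j
    rw [← ValuationSubring.valuation_le_one_iff, map_mul, map_inv₀,
      inv_mul_le_one₀ (zero_lt_iff.mpr hvs)]
    exact hmax (i, j) (Finset.mem_univ _)
  set N : Matrix (Fin 2) (Fin 2) ↥O :=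
    Matrix.of fun i j => (⟨s⁻¹ * M i j, hmem i j⟩ : ↥O) with hN
  have hNcoe : ∀ i j, ((N i j : L)) = s⁻¹ * M i j := fun i j => rfl
  have hNmap : (N.map (fun r : ↥O => (r : L))) = s⁻¹ • M := by
    ext i j
    simp [Matrix.smul_apply, smul_eq_mul, hNcoe]
  have hmob : ∀ x, ProjLine.mobius (N.map (fun r : ↥O => (r : L))) x = ProjLine.mobius M x := by
    intro x
    rw [hNmap]
    exact Sub34.mobius_smul (inv_ne_zero hs0) M x
  refine ⟨N, ?_, hmob⟩
  by_contra hdet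
  -- residues
  set ρ : ↥O →+* IsLocalRing.ResidueField ↥O := IsLocalRing.residue ↥O with hρ
  have hres : ρ N.det = 0 := (IsLocalRing.residue_eq_zero_iff _).mpr hdet
  set a := ρ (N 0 0) with ha
  set b := ρ (N 0 1) with hb
  set c := ρ (N 1 0) with hc
  set d := ρ (N 1 1) with hd
  have hdet0 : a * d - b * c = 0 := by
    rw [ha, hb, hc, hd, ← map_mul, ← map_mul, ← map_sub, ← Matrix.det_fin_two]
    exact hres
  have hone : ρ (N i0 j0) = 1 := by
    have hN1 : N i0 j0 = 1 := by
      ext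
      show s⁻¹ * s = 1
      exact inv_mul_cancel₀ hs0
    rw [hN1, map_one]
  have habcd : a ≠ 0 ∨ b ≠ 0 ∨ c ≠ 0 ∨ d ≠ 0 := by
    by_contra hcon
    push_neg at hcon
    obtain ⟨ha0, hb0, hc0, hd0⟩ := hcon
    have h0 : ρ (N i0 j0) = 0 := by
      fin_cases i0 <;> fin_cases j0 <;> [exact ha0; exact hb0; exact hc0; exact hd0]
    rw [hone] at h0
    exact one_ne_zero h0
  -- normalized coordinates of the Pᵢ
  choose u w hnz hrep using fun i => Sub34.exists_rep O (P i)
  set ub : Fin 3 → IsLocalRing.ResidueField ↥O := fun i => ρ (u i) with hub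
  set vb : Fin 3 → IsLocalRing.ResidueField ↥O := fun i => ρ (w i) with hvb
  have hnz' : ∀ i, ub i ≠ 0 ∨ vb i ≠ 0 := fun i => hnz i
  have hPbar : ∀ i j, i ≠ j → ub i * vb j ≠ ub j * vb i := by
    intro i j hij hcr
    apply hP i j hij
    rw [hrep i, hrep j, Sub34.red_mk O _ _ (hnz i), Sub34.red_mk O _ _ (hnz j)]
    exact (Sub34.mk_eq_mk (hnz' i) (hnz' j)).mpr hcr
  have huw0 : ∀ i, ((u i : L) ≠ 0 ∨ (w i : L) ≠ 0) := by
    intro i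
    rcases hnz i with h | h
    · exact Or.inl (fun h0 => h (by rw [show u i = 0 from Subtype.ext h0, map_zero]))
    · exact Or.inr (fun h0 => h (by rw [show w i = 0 from Subtype.ext h0, map_zero]))
  -- images
  have hQrep : ∀ i, Q i =
      Sub34.mk ((N 0 0 * u i + N 0 1 * w i : ↥O) : L) ((N 1 0 * u i + N 1 1 * w i : ↥O) : L) := by
    intro i
    rw [← hmap i, ← hmob (P i), hrep i, Sub34.mobius_mk _ (huw0 i)]
    congr 1 <;> push_cast <;> rw [hNcoe, hNcoe] <;> ring
  have hρ1 : ∀ i, ρ (N 0 0 * u i + N 0 1 * w i) = a * ub i + b * vb i := by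
    intro i; rw [map_add, map_mul, map_mul]
  have hρ2 : ∀ i, ρ (N 1 0 * u i + N 1 1 * w i) = c * ub i + d * vb i := by
    intro i; rw [map_add, map_mul, map_mul]
  -- two "good" indices give equal reductions of Q
  have key : ∀ i j, i ≠ j →
      (a * ub i + b * vb i ≠ 0 ∨ c * ub i + d * vb i ≠ 0) →
      (a * ub j + b * vb j ≠ 0 ∨ c * ub j + d * vb j ≠ 0) → False := by
    intro i j hij hi hj
    apply hQ i j hij
    rw [hQrep i, hQrep j,
      Sub34.red_mk O _ _ (by rw [hρ1 i, hρ2 i]; exact hi),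
      Sub34.red_mk O _ _ (by rw [hρ1 j, hρ2 j]; exact hj),
      hρ1 i, hρ2 i, hρ1 j, hρ2 j]
    apply (Sub34.mk_eq_mk hi hj).mpr
    linear_combination (ub i * vb j - ub j * vb i) * hdet0
  -- two "bad" indices contradict distinctness of the Pᵢ
  have twobad : ∀ i j, i ≠ j →
      (a * ub i + b * vb i = 0 ∧ c * ub i + d * vb i = 0) →
      (a * ub j + b * vb j = 0 ∧ c * ub j + d * vb j = 0) → False := by
    intro i j hij hi hj
    apply hPbar i j hij
    have hcr : ub i * vb j - ub j * vb i = 0 := by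
      rcases habcd with h | h | h | h
      · have h2 : a * (ub i * vb j - ub j * vb i) = 0 := by
          linear_combination vb j * hi.1 - vb i * hj.1
        exact (mul_eq_zero.mp h2).resolve_left h
      · have h2 : b * (ub i * vb j - ub j * vb i) = 0 := by
          linear_combination (- ub j) * hi.1 + ub i * hj.1
        exact (mul_eq_zero.mp h2).resolve_left h
      · have h2 : c * (ub i * vb j - ub j * vb i) = 0 := by
          linear_combination vb j * hi.2 - vb i * hj.2
        exact (mul_eq_zero.mp h2).resolve_left h
      · have h2 : d * (ub i * vb j - ub j * vb i) = 0 := by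
          linear_combination (- ub j) * hi.2 + ub i * hj.2
        exact (mul_eq_zero.mp h2).resolve_left h
    exact sub_eq_zero.mp hcr
  have h01 : (0 : Fin 3) ≠ 1 := by decide
  have h02 : (0 : Fin 3) ≠ 2 := by decide
  have h12 : (1 : Fin 3) ≠ 2 := by decide
  by_cases B0 : a * ub 0 + b * vb 0 = 0 ∧ c * ub 0 + d * vb 0 = 0
  · by_cases B1 : a * ub 1 + b * vb 1 = 0 ∧ c * ub 1 + d * vb 1 = 0
    · exact twobad 0 1 h01 B0 B1
    · by_cases B2 : a * ub 2 + b * vb 2 = 0 ∧ c * ub 2 + d * vb 2 = 0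
      · exact twobad 0 2 h02 B0 B2
      · exact key 1 2 h12 (not_and_or.mp B1) (not_and_or.mp B2)
  · by_cases B1 : a * ub 1 + b * vb 1 = 0 ∧ c * ub 1 + d * vb 1 = 0
    · by_cases B2 : a * ub 2 + b * vb 2 = 0 ∧ c * ub 2 + d * vb 2 = 0
      · exact twobad 1 2 h12 B1 B2
      · exact key 0 2 h02 (not_and_or.mp B0) (not_and_or.mp B2)
    · exact key 0 1 h01 (not_and_or.mp B0) (not_and_or.mp B1)

end
end

section
/- Let K be a field, and let f, g : P^1_K → P^1_K be rational maps (morphisms), each of degree d ≥ 1. Suppose that ∑_{P ∈ P^1(K), f(P)=g(P)} min{e_f(P), e_g(P)} ≥ 2d+1. Then f = g. -/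
open Polynomial
open scoped Classical

noncomputable section
open Polynomial




private lemma evalAt_agree_root {F : Type*} [Field F] {p q r s : F[X]} {x : F}
    (h : ProjLine.evalAt p q x = ProjLine.evalAt r s x) :
    (p * s - q * r).eval x = 0 := by
  unfold ProjLine.evalAt at h
  by_cases hq : q.eval x = 0 <;> by_cases hs : s.eval x = 0
  · simp [hq, hs]
  · simp [hq, hs] at h
  · simp [hq, hs] at h
  · simp only [if_neg hq, if_neg hs, Option.some.injEq] at h
    simp only [eval_sub, eval_mul, sub_eq_zero]
    exact ((div_eq_div_iff hq hs).mp h).trans (mul_comm _ _)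

private lemma min_ramAt_le {F : Type*} [Field F] {p q r s : F[X]}
    (hW : p * s - q * r ≠ 0) {x : F}
    (h : ProjLine.evalAt p q x = ProjLine.evalAt r s x) :
    min (ProjLine.ramAt p q x) (ProjLine.ramAt r s x)
      ≤ rootMultiplicity x (p * s - q * r) := by
  rw [Polynomial.le_rootMultiplicity_iff hW]
  unfold ProjLine.evalAt at h
  unfold ProjLine.ramAt
  by_cases hq : q.eval x = 0 <;> by_cases hs : s.eval x = 0
  · rw [if_pos hq, if_pos hs]
    set m := min (rootMultiplicity x q) (rootMultiplicity x s) with hm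
    have h1 : (X - C x) ^ m ∣ q :=
      (pow_dvd_pow _ (min_le_left _ _)).trans (pow_rootMultiplicity_dvd q x)
    have h2 : (X - C x) ^ m ∣ s :=
      (pow_dvd_pow _ (min_le_right _ _)).trans (pow_rootMultiplicity_dvd s x)
    exact dvd_sub (h2.mul_left p) (h1.mul_right r)
  · simp [hq, hs] at h
  · simp [hq, hs] at h
  · rw [if_neg hq, if_neg hs]
    simp only [if_neg hq, if_neg hs, Option.some.injEq] at h
    have hx : p.eval x * s.eval x = q.eval x * r.eval x := ((div_eq_div_iff hq hs).mp h).trans (mul_comm _ _)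
    set A := C (q.eval x) * p - C (p.eval x) * q with hA
    set B := C (s.eval x) * r - C (r.eval x) * s with hB
    set m := min (rootMultiplicity x A) (rootMultiplicity x B) with hm
    have h1 : (X - C x) ^ m ∣ A :=
      (pow_dvd_pow _ (min_le_left _ _)).trans (pow_rootMultiplicity_dvd A x)
    have h2 : (X - C x) ^ m ∣ B :=
      (pow_dvd_pow _ (min_le_right _ _)).trans (pow_rootMultiplicity_dvd B x)
    have hc : C (p.eval x) * C (s.eval x) = C (q.eval x) * C (r.eval x) := by
      rw [← C_mul, ← C_mul, hx]
    have key : C (s.eval x) * s * A - C (q.eval x) * q * B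
        = (C (q.eval x) * C (s.eval x)) * (p * s - q * r) := by
      rw [hA, hB]; linear_combination (-(q*s)) * hc
    have hdvd : (X - C x) ^ m ∣ (C (q.eval x) * C (s.eval x)) * (p * s - q * r) := by
      rw [← key]; exact dvd_sub (h1.mul_left _) (h2.mul_left _)
    have : p * s - q * r
        = C ((q.eval x)⁻¹ * (s.eval x)⁻¹) * ((C (q.eval x) * C (s.eval x)) * (p * s - q * r)) := by
      rw [← mul_assoc, ← C_mul, ← C_mul]
      field_simp
      rw [C_1, one_mul]
    rw [this]
    exact hdvd.mul_left _

private lemma evalAt_C_mul {F : Type*} [Field F] (c : F) (hc : c ≠ 0) (p q : F[X]) (x : F) :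
    ProjLine.evalAt (C c * p) (C c * q) x = ProjLine.evalAt p q x := by
  unfold ProjLine.evalAt
  by_cases hq : q.eval x = 0
  · simp [hq]
  · rw [if_neg (by simp [hq, hc]), if_neg hq]
    simp only [eval_mul, eval_C]
    rw [mul_div_mul_left _ _ hc]


/-- **Lemma 3.5 (interpolation of rational maps).**  Let `f = [p : q]` and
`g = [r : s]` be degree-`d` morphisms of `P¹` over a field `F` with `d ≥ 1`.  If
`∑_{P ∈ P¹(F), f(P) = g(P)} min(e_f(P), e_g(P)) ≥ 2d + 1`, then `f = g`. -/
theorem rational_maps_eq_of_high_order_agreement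
    (F : Type*) [Field F] (d : ℕ) (hd : 1 ≤ d)
    (p q r s : F[X]) (hf : IsRatMapOfDeg d p q) (hg : IsRatMapOfDeg d r s)
    (hsum : 2 * d + 1 ≤
      ∑ᶠ P ∈ {P : ProjLine F | ProjLine.eval d p q P = ProjLine.eval d r s P},
        min (ProjLine.ram d p q P) (ProjLine.ram d r s P)) :
    ∀ P : ProjLine F, ProjLine.eval d p q P = ProjLine.eval d r s P := by
  obtain ⟨hco, hpd, hqd, hor⟩ := hf
  obtain ⟨hco', hrd, hsd, hor'⟩ := hg
  by_cases hW : p * s - q * r = 0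
  · -- the two maps are literally proportional
    have hps : p * s = q * r := sub_eq_zero.mp hW
    have hp0 : p ≠ 0 := by
      rintro rfl
      have hqu : IsUnit q := isCoprime_zero_left.mp hco
      have := Polynomial.natDegree_eq_zero_of_isUnit hqu
      simp only [natDegree_zero] at hor
      omega
    have hr0 : r ≠ 0 := by
      rintro rfl
      have hsu : IsUnit s := isCoprime_zero_left.mp hco'
      have := Polynomial.natDegree_eq_zero_of_isUnit hsu
      simp only [natDegree_zero] at hor'
      omega
    have hpr : p ∣ r := hco.dvd_of_dvd_mul_left (by rw [← hps]; exact dvd_mul_right p s)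
    have hrp : r ∣ p := hco'.dvd_of_dvd_mul_left (by rw [mul_comm, hps]; exact dvd_mul_left r q)
    obtain ⟨u, hu⟩ := associated_of_dvd_dvd hpr hrp
    obtain ⟨c, hcu, hcC⟩ := Polynomial.isUnit_iff.mp u.isUnit
    have hc0 : c ≠ 0 := hcu.ne_zero
    have hr2 : r = C c * p := by rw [← hu, ← hcC]; ring
    have hs2 : s = C c * q := by
      have h' : p * (C c * q) = p * s := by rw [hps, hr2]; ring
      exact (mul_left_cancel₀ hp0 h').symm
    intro P
    match P with
    | some x =>
      show ProjLine.evalAt p q x = ProjLine.evalAt r s x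
      rw [hr2, hs2, evalAt_C_mul c hc0]
    | none =>
      show ProjLine.evalAt (p.reflect d) (q.reflect d) 0
          = ProjLine.evalAt (r.reflect d) (s.reflect d) 0
      rw [hr2, hs2, reflect_C_mul, reflect_C_mul, evalAt_C_mul c hc0]
  · exfalso
    set W := p * s - q * r with hWdef
    have hWd : W.natDegree ≤ 2 * d := by
      refine (natDegree_sub_le _ _).trans (max_le ?_ ?_)
      · exact natDegree_mul_le.trans (by omega)
      · exact natDegree_mul_le.trans (by omega)
    have hrefl : Polynomial.reflect (2 * d) W
        = (p.reflect d) * (s.reflect d) - (q.reflect d) * (r.reflect d) := by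
      rw [hWdef, reflect_sub, two_mul, reflect_mul p s hpd hsd, reflect_mul q r hqd hrd]
    have hWr : Polynomial.reflect (2 * d) W ≠ 0 := by
      simpa [Polynomial.reflect_eq_zero_iff] using hW
    have hWr0 : (p.reflect d) * (s.reflect d) - (q.reflect d) * (r.reflect d) ≠ 0 := by
      rw [← hrefl]; exact hWr
    set S := {P : ProjLine F | ProjLine.eval d p q P = ProjLine.eval d r s P} with hSdef
    have hroot : ∀ x : F, (some x) ∈ S → W.IsRoot x := fun x hx => evalAt_agree_root hx
    have hSfin : S.Finite := by
      apply Set.Finite.subset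
        (Set.Finite.insert none ((Polynomial.finite_setOf_isRoot hW).image some))
      intro P hP
      match P with
      | none => exact Set.mem_insert _ _
      | some x => exact Set.mem_insert_of_mem _ ⟨x, hroot x hP, rfl⟩
    set G : ProjLine F → ℕ := fun P => match P with
      | some x => rootMultiplicity x W
      | none => rootMultiplicity 0 (Polynomial.reflect (2 * d) W)
      with hG
    have key : ∀ P ∈ S, min (ProjLine.ram d p q P) (ProjLine.ram d r s P) ≤ G P := by
      intro P hP
      match P with
      | none =>
        show min (ProjLine.ramAt (p.reflect d) (q.reflect d) 0)
            (ProjLine.ramAt (r.reflect d) (s.reflect d) 0)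
          ≤ rootMultiplicity 0 (Polynomial.reflect (2 * d) W)
        rw [hrefl]
        exact min_ramAt_le hWr0 hP
      | some x => exact min_ramAt_le hW hP
    rw [finsum_mem_eq_finite_toFinset_sum _ hSfin] at hsum
    set T : Finset (ProjLine F) := insert none (W.roots.toFinset.image some) with hT
    have h1 : ∑ P ∈ hSfin.toFinset, min (ProjLine.ram d p q P) (ProjLine.ram d r s P)
        ≤ ∑ P ∈ hSfin.toFinset, G P :=
      Finset.sum_le_sum fun P hP => key P (hSfin.mem_toFinset.mp hP)
    have h2 : hSfin.toFinset ⊆ T := by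
      intro P hP
      have hP' := hSfin.mem_toFinset.mp hP
      match P with
      | none => exact Finset.mem_insert_self _ _
      | some x =>
        refine Finset.mem_insert_of_mem (Finset.mem_image.mpr ⟨x, ?_, rfl⟩)
        rw [Multiset.mem_toFinset, Polynomial.mem_roots']
        exact ⟨hW, hroot x hP'⟩
    have h3 : ∑ P ∈ hSfin.toFinset, G P ≤ ∑ P ∈ T, G P :=
      Finset.sum_le_sum_of_subset h2
    have hnone : (none : ProjLine F) ∉ W.roots.toFinset.image some := by simp
    have h4 : ∑ P ∈ T, G P = G none + ∑ x ∈ W.roots.toFinset, rootMultiplicity x W := by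
      rw [hT, Finset.sum_insert hnone,
        Finset.sum_image (fun a _ b _ h => Option.some_injective _ h)]
    have h5 : ∑ x ∈ W.roots.toFinset, rootMultiplicity x W = Multiset.card W.roots := by
      simp_rw [← Polynomial.count_roots]
      exact Multiset.toFinset_sum_count_eq _
    have h6 : Multiset.card W.roots ≤ W.natDegree := W.card_roots'
    have h7 : G none ≤ 2 * d - W.natDegree := by
      show rootMultiplicity 0 (Polynomial.reflect (2 * d) W) ≤ 2 * d - W.natDegree
      rw [Polynomial.rootMultiplicity_le_iff hWr, map_zero, sub_zero]
      intro hdvd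
      have hcoeff := Polynomial.X_pow_dvd_iff.mp hdvd (2 * d - W.natDegree) (Nat.lt_succ_self _)
      rw [Polynomial.coeff_reflect, Polynomial.revAt_le (by omega),
        Nat.sub_sub_self hWd] at hcoeff
      exact Polynomial.leadingCoeff_ne_zero.mpr hW hcoeff
    have hfinal : 2 * d + 1 ≤ 2 * d := by
      calc 2 * d + 1 ≤ _ := hsum
        _ ≤ ∑ P ∈ hSfin.toFinset, G P := h1
        _ ≤ ∑ P ∈ T, G P := h3
        _ = G none + ∑ x ∈ W.roots.toFinset, rootMultiplicity x W := h4
        _ ≤ (2 * d - W.natDegree) + W.natDegree := by rw [h5]; exact add_le_add h7 h6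
        _ = 2 * d := by omega
    omega


end
end

section
/- Let d ≥ 2 and let K̄ be an algebraic closure of a number field K. For a ∈ K̄^×, let f_a(x) = a·x(x−1)(x−2)⋯(x−d+1) / ((x+1)(x+2)⋯(x+d−1)), a rational map of degree d on P^1 over K̄. Then for each fixed a ∈ K̄^×, there are only finitely many b ∈ K̄^× such that f_b is PGL_2(K̄)-conjugate to f_a, i.e., such that there exists φ ∈ PGL_2(K̄) with φ^{-1} ∘ f_a ∘ φ = f_b. -/
open Polynomial
open scoped Classical

noncomputable section
open Polynomial

/-- Numerator `a·x(x-1)(x-2)⋯(x-d+1)` of the map `f_a` of Proposition 4.1. -/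
def fNum (L : Type*) [Field L] (d : ℕ) (a : L) : L[X] :=
  C a * ∏ i ∈ Finset.range d, (X - C ((i : ℕ) : L))

/-- Denominator `(x+1)(x+2)⋯(x+d-1)` of the map `f_a` of Proposition 4.1. -/
def fDen (L : Type*) [Field L] (d : ℕ) : L[X] :=
  ∏ i ∈ Finset.range (d - 1), (X + C ((i + 1 : ℕ) : L))

/-- The set `X = {0, ±1, ±2, …, ±(d-1)} ∪ {∞}` of `2d` points of Proposition 4.1. -/
def stdSet (L : Type*) [Field L] (d : ℕ) : Set (ProjLine L) :=
  insert (none : ProjLine L)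
    ((fun m : ℤ => (some ((m : ℤ) : L) : ProjLine L)) '' Set.Icc (-(d : ℤ) + 1) ((d : ℤ) - 1))

end

noncomputable section
open Polynomial


namespace MobAux
open ProjLine
variable {L : Type*} [Field L]

def pt (w : Fin 2 → L) : ProjLine L := if w 1 = 0 then none else some (w 0 / w 1)

def vec : ProjLine L → Fin 2 → L
  | some x => ![x, 1]
  | none => ![1, 0]

lemma mulVec_apply (M : Matrix (Fin 2) (Fin 2) L) (w : Fin 2 → L) (i : Fin 2) :
    M.mulVec w i = M i 0 * w 0 + M i 1 * w 1 := by
  simp [Matrix.mulVec, dotProduct, Fin.sum_univ_two]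

lemma mobius_eq_pt (M : Matrix (Fin 2) (Fin 2) L) (P : ProjLine L) :
    mobius M P = pt (M.mulVec (vec P)) := by
  cases P with
  | none => simp [mobius, pt, vec, mulVec_apply]
  | some x => simp [mobius, pt, vec, mulVec_apply]

lemma pt_smul {c : L} (hc : c ≠ 0) (w : Fin 2 → L) : pt (c • w) = pt w := by
  unfold pt
  simp only [Pi.smul_apply, smul_eq_mul, mul_eq_zero, hc, false_or]
  split_ifs with h
  · rfl
  · rw [mul_div_mul_left _ _ hc]

lemma vec_pt {w : Fin 2 → L} (hw : w ≠ 0) : ∃ c : L, c ≠ 0 ∧ vec (pt w) = c • w := by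
  by_cases h1 : w 1 = 0
  · have h0 : w 0 ≠ 0 := by
      intro h0
      apply hw; funext i; fin_cases i <;> simp [h0, h1]
    refine ⟨(w 0)⁻¹, inv_ne_zero h0, ?_⟩
    funext i
    simp only [pt, if_pos h1, vec]
    fin_cases i <;> simp [h0, h1, inv_mul_cancel₀ h0]
  · refine ⟨(w 1)⁻¹, inv_ne_zero h1, ?_⟩
    funext i
    simp only [pt, if_neg h1, vec]
    fin_cases i <;> simp [h1, div_eq_inv_mul, inv_mul_cancel₀ h1]

lemma vec_ne_zero (P : ProjLine L) : vec P ≠ 0 := by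
  cases P with
  | none => intro h; have := congrFun h 0; simp [vec] at this
  | some x => intro h; have := congrFun h 1; simp [vec] at this

lemma mobius_mul (M N : Matrix (Fin 2) (Fin 2) L) (hN : N.det ≠ 0) (P : ProjLine L) :
    mobius (M * N) P = mobius M (mobius N P) := by
  have hNu : IsUnit N.det := isUnit_iff_ne_zero.mpr hN
  have hw : N.mulVec (vec P) ≠ 0 := by
    intro h
    have : vec P = 0 := by
      have := congrArg (Matrix.mulVec N⁻¹) h
      rwa [Matrix.mulVec_mulVec, Matrix.nonsing_inv_mul _ hNu, Matrix.one_mulVec,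
        Matrix.mulVec_zero] at this
    exact vec_ne_zero P this
  obtain ⟨c, hc, hvp⟩ := vec_pt hw
  rw [mobius_eq_pt, mobius_eq_pt, mobius_eq_pt, hvp, Matrix.mulVec_smul, pt_smul hc,
    Matrix.mulVec_mulVec]

lemma mobius_one (P : ProjLine L) : mobius (1 : Matrix (Fin 2) (Fin 2) L) P = P := by
  rw [mobius_eq_pt, Matrix.one_mulVec]
  cases P with
  | none => simp [pt, vec]
  | some x => simp [pt, vec]

lemma mobius_inj {M : Matrix (Fin 2) (Fin 2) L} (hM : M.det ≠ 0) :
    Function.Injective (mobius M) := by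
  have hMu : IsUnit M.det := isUnit_iff_ne_zero.mpr hM
  intro P Q h
  have := congrArg (mobius M⁻¹) h
  rwa [← mobius_mul _ _ hM, ← mobius_mul _ _ hM, Matrix.nonsing_inv_mul _ hMu,
    mobius_one, mobius_one] at this

lemma mobius_ext {M M' : Matrix (Fin 2) (Fin 2) L} (hM : M.det ≠ 0) (hM' : M'.det ≠ 0)
    (h0 : mobius M (some 0) = mobius M' (some 0))
    (h1 : mobius M (some 1) = mobius M' (some 1))
    (hi : mobius M none = mobius M' none) :
    ∀ P, mobius M P = mobius M' P := by
  have hM'u : IsUnit M'.det := isUnit_iff_ne_zero.mpr hM'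
  set N := M'⁻¹ * M with hNdef
  have hNdet : N.det ≠ 0 := by
    rw [hNdef, Matrix.det_mul, Matrix.det_nonsing_inv, Ring.inverse_eq_inv]
    exact mul_ne_zero (inv_ne_zero hM') hM
  have hfix : ∀ P ∈ ({some 0, some 1, none} : Set (ProjLine L)), mobius N P = P := by
    intro P hP
    have key : mobius M' (mobius N P) = mobius M' P := by
      rw [← mobius_mul _ _ hNdet, hNdef, ← Matrix.mul_assoc,
        Matrix.mul_nonsing_inv _ hM'u, Matrix.one_mul]
      rcases hP with rfl | rfl | rfl
      · exact h0
      · exact h1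
      · exact hi
    exact mobius_inj hM' key
  have hN10 : N 1 0 = 0 := by
    have := hfix none (by simp)
    simp only [mobius] at this
    by_contra h
    rw [if_neg h] at this
    cases this
  have hN11 : N 1 1 ≠ 0 := by
    have := hfix (some 0) (by simp)
    simp only [mobius, mul_zero, zero_add, add_zero] at this
    intro h
    rw [if_pos h] at this
    cases this
  have hN01 : N 0 1 = 0 := by
    have := hfix (some 0) (by simp)
    simp only [mobius, mul_zero, zero_add, add_zero, if_neg hN11] at this
    have h2 := Option.some_injective _ this
    rcases div_eq_zero_iff.mp h2 with h | h
    · exact h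
    · exact absurd h hN11
  have hN00 : N 0 0 = N 1 1 := by
    have := hfix (some 1) (by simp)
    simp only [mobius, mul_one, hN10, hN01, add_zero, zero_add, if_neg hN11] at this
    have h2 := Option.some_injective _ this
    field_simp at h2
    exact h2
  have hNid : ∀ P, mobius N P = P := by
    intro P
    cases P with
    | none => simp [mobius, hN10]
    | some x =>
      simp only [mobius, hN10, hN01, zero_mul, zero_add, add_zero, if_neg hN11, hN00]
      rw [mul_comm, mul_div_assoc, div_self hN11, mul_one]
  intro P
  have : mobius M' (mobius N P) = mobius M' P := by rw [hNid]
  rw [← mobius_mul _ _ hNdet, hNdef, ← Matrix.mul_assoc,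
    Matrix.mul_nonsing_inv _ hM'u, Matrix.one_mul] at this
  exact this

end MobAux

namespace PolAux
variable {L : Type*} [Field L] [CharZero L]

lemma fDen_eval_nat (d n : ℕ) : (fDen L d).eval (n : L) ≠ 0 := by
  unfold fDen
  rw [Polynomial.eval_prod]
  rw [Finset.prod_ne_zero_iff]
  intro i _
  simp only [Polynomial.eval_add, Polynomial.eval_X, Polynomial.eval_C]
  have : ((n : L) + ((i + 1 : ℕ) : L)) = ((n + (i + 1) : ℕ) : L) := by push_cast; ring
  rw [this]
  exact Nat.cast_ne_zero.mpr (by omega)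

omit [CharZero L] in
lemma fDen_eval_neg_one {d : ℕ} (hd : 2 ≤ d) : (fDen L d).eval (-1) = 0 := by
  unfold fDen
  rw [Polynomial.eval_prod]
  refine Finset.prod_eq_zero (Finset.mem_range.mpr (by omega : 0 < d - 1)) ?_
  simp

omit [CharZero L] in
lemma fNum_eval_lt {d : ℕ} (b : L) {k : ℕ} (hk : k < d) : (fNum L d b).eval (k : L) = 0 := by
  unfold fNum
  rw [Polynomial.eval_mul, Polynomial.eval_prod]
  rw [Finset.prod_eq_zero (Finset.mem_range.mpr hk) (by simp)]
  ring

lemma fNum_eval_d {d : ℕ} {b : L} (hb : b ≠ 0) : (fNum L d b).eval (d : L) ≠ 0 := by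
  unfold fNum
  rw [Polynomial.eval_mul, Polynomial.eval_prod, Polynomial.eval_C]
  refine mul_ne_zero hb (Finset.prod_ne_zero_iff.mpr fun i hi => ?_)
  simp only [Polynomial.eval_sub, Polynomial.eval_X, Polynomial.eval_C]
  rw [sub_ne_zero]
  exact_mod_cast fun h => absurd (Nat.cast_injective h) (by simp at hi; omega)

lemma fNum_eval_neg_one {d : ℕ} {b : L} (hb : b ≠ 0) : (fNum L d b).eval (-1) ≠ 0 := by
  unfold fNum
  rw [Polynomial.eval_mul, Polynomial.eval_prod, Polynomial.eval_C]
  refine mul_ne_zero hb (Finset.prod_ne_zero_iff.mpr fun i hi => ?_)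
  simp only [Polynomial.eval_sub, Polynomial.eval_X, Polynomial.eval_C]
  intro h
  have : ((i + 1 : ℕ) : L) = 0 := by push_cast; linear_combination -h
  exact_mod_cast this

omit [CharZero L] in
lemma fDen_natDegree (d : ℕ) : (fDen L d).natDegree = d - 1 := by
  unfold fDen
  rw [Polynomial.natDegree_prod _ _ (fun i _ => Polynomial.X_add_C_ne_zero _)]
  rw [Finset.sum_congr rfl (fun i _ => Polynomial.natDegree_X_add_C ((i + 1 : ℕ) : L))]
  simp

omit [CharZero L] in
lemma fDen_coeff_d {d : ℕ} (hd : 2 ≤ d) : (fDen L d).coeff d = 0 :=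
  Polynomial.coeff_eq_zero_of_natDegree_lt (by rw [fDen_natDegree]; omega)

omit [CharZero L] in
lemma fNum_eval_eq {d : ℕ} (b x : L) : (fNum L d b).eval x = b * (fNum L d 1).eval x := by
  unfold fNum
  simp [Polynomial.eval_mul]

end PolAux

open MobAux PolAux in
/-- **Proposition 4.1(b).**  Over an algebraically closed field of characteristic `0`,
for each fixed `a ≠ 0` there are only finitely many `b ≠ 0` such that
`f_b(x) = b·x(x-1)⋯(x-d+1)/((x+1)⋯(x+d-1))` is `PGL₂`-conjugate to `f_a`. -/
theorem fa_conjugates_finite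
    (L : Type*) [Field L] [IsAlgClosed L] [CharZero L]
    (d : ℕ) (hd : 2 ≤ d) (a : L) (ha : a ≠ 0) :
    {b : L | b ≠ 0 ∧ ∃ M : Matrix (Fin 2) (Fin 2) L, M.det ≠ 0 ∧
      ∀ P : ProjLine L,
        ProjLine.mobius M (ProjLine.eval d (fNum L d b) (fDen L d) P)
          = ProjLine.eval d (fNum L d a) (fDen L d) (ProjLine.mobius M P)}.Finite := by
  classical
  have hq0 : ∀ n : ℕ, (fDen L d).eval ((n : ℕ) : L) ≠ 0 := fun n => fDen_eval_nat d n
  have hqz : (fDen L d).eval (0 : L) ≠ 0 := by simpa using hq0 0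
  have hq1 : (fDen L d).eval (1 : L) ≠ 0 := by simpa using hq0 1
  -- value computations for f_b at 0, 1, ∞
  have heval0 : ∀ b : L, ProjLine.eval d (fNum L d b) (fDen L d) (some 0) = some 0 := by
    intro b
    show ProjLine.evalAt (fNum L d b) (fDen L d) 0 = some 0
    unfold ProjLine.evalAt
    rw [if_neg hqz]
    have hn : (fNum L d b).eval (0 : L) = 0 := by
      simpa using fNum_eval_lt (L := L) b (show 0 < d by omega)
    rw [hn, zero_div]
  have heval1 : ∀ b : L, ProjLine.eval d (fNum L d b) (fDen L d) (some 1) = some 0 := by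
    intro b
    show ProjLine.evalAt (fNum L d b) (fDen L d) 1 = some 0
    unfold ProjLine.evalAt
    rw [if_neg hq1]
    have hn : (fNum L d b).eval (1 : L) = 0 := by
      simpa using fNum_eval_lt (L := L) b (show 1 < d by omega)
    rw [hn, zero_div]
  have hevalinf : ∀ b : L, ProjLine.eval d (fNum L d b) (fDen L d) none = none := by
    intro b
    show ProjLine.evalAt ((fNum L d b).reflect d) ((fDen L d).reflect d) 0 = none
    unfold ProjLine.evalAt
    rw [if_pos]
    rw [← Polynomial.coeff_zero_eq_eval_zero, Polynomial.coeff_reflect,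
      Polynomial.revAt_le (Nat.zero_le d), Nat.sub_zero]
    exact fDen_coeff_d hd
  -- fixed points and preimages of fixed points of f_a
  have hpane : (fNum L d a).eval (-1 : L) ≠ 0 := fNum_eval_neg_one ha
  have hqm1 : (fDen L d).eval (-1 : L) = 0 := fDen_eval_neg_one hd
  set r : L[X] := fNum L d a - X * fDen L d with hrdef
  have hr0 : r ≠ 0 := by
    intro h
    have h2 : r.eval (-1) = 0 := by rw [h]; simp
    rw [hrdef] at h2
    simp only [Polynomial.eval_sub, Polynomial.eval_mul, Polynomial.eval_X, hqm1,
      mul_zero, sub_zero] at h2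
    exact hpane h2
  set Fix : Set (ProjLine L) := {P | ProjLine.eval d (fNum L d a) (fDen L d) P = P}
    with hFixdef
  have hFixSome : ∀ x : L, some x ∈ Fix → r.eval x = 0 := by
    intro x hx
    have hx' : ProjLine.evalAt (fNum L d a) (fDen L d) x = some x := hx
    unfold ProjLine.evalAt at hx'
    split_ifs at hx' with h
    have h1 := Option.some_injective _ hx'
    have h2 : (fNum L d a).eval x = x * (fDen L d).eval x := by
      field_simp at h1
      linear_combination h1
    simp only [hrdef, Polynomial.eval_sub, Polynomial.eval_mul, Polynomial.eval_X, h2,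
      sub_self]
  have hFixFin : Fix.Finite := by
    apply Set.Finite.subset
      (Set.Finite.insert none ((Polynomial.finite_setOf_isRoot hr0).image some))
    rintro (_ | x) hP
    · exact Set.mem_insert _ _
    · exact Set.mem_insert_iff.mpr (Or.inr ⟨x, hFixSome x hP, rfl⟩)
  set Pre : Set (ProjLine L) := {P | ProjLine.eval d (fNum L d a) (fDen L d) P ∈ Fix}
    with hPredef
  have hqne : fDen L d ≠ 0 := fun h => hqz (by rw [h]; simp)
  have hPreFin : Pre.Finite := by
    have hT : {y : L | r.IsRoot y}.Finite := Polynomial.finite_setOf_isRoot hr0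
    have hbig : (⋃ y ∈ {y : L | r.IsRoot y},
        {x : L | (fNum L d a - C y * fDen L d).IsRoot x}).Finite := by
      refine hT.biUnion fun y _ => Polynomial.finite_setOf_isRoot ?_
      intro h
      have h2 : (fNum L d a - C y * fDen L d).eval (-1) = 0 := by rw [h]; simp
      simp only [Polynomial.eval_sub, Polynomial.eval_mul, Polynomial.eval_C, hqm1,
        mul_zero, sub_zero] at h2
      exact hpane h2
    apply Set.Finite.subset (Set.Finite.insert none
      (((Polynomial.finite_setOf_isRoot hqne).union hbig).image some))
    rintro (_ | x) hP
    · exact Set.mem_insert _ _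
    · refine Set.mem_insert_iff.mpr (Or.inr ⟨x, ?_, rfl⟩)
      have hP' : ProjLine.evalAt (fNum L d a) (fDen L d) x ∈ Fix := hP
      unfold ProjLine.evalAt at hP'
      split_ifs at hP' with h
      · exact Or.inl h
      · refine Or.inr (Set.mem_biUnion (hFixSome _ hP') ?_)
        show (fNum L d a - C ((fNum L d a).eval x / (fDen L d).eval x) * fDen L d).eval x = 0
        simp only [Polynomial.eval_sub, Polynomial.eval_mul, Polynomial.eval_C]
        field_simp
        ring
  -- choose a conjugating matrix for every b in the set
  have key : ∀ b : L, (b ≠ 0 ∧ ∃ M : Matrix (Fin 2) (Fin 2) L, M.det ≠ 0 ∧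
      ∀ P : ProjLine L,
        ProjLine.mobius M (ProjLine.eval d (fNum L d b) (fDen L d) P)
          = ProjLine.eval d (fNum L d a) (fDen L d) (ProjLine.mobius M P)) →
      ∃ M : Matrix (Fin 2) (Fin 2) L, M.det ≠ 0 ∧
      ∀ P : ProjLine L,
        ProjLine.mobius M (ProjLine.eval d (fNum L d b) (fDen L d) P)
          = ProjLine.eval d (fNum L d a) (fDen L d) (ProjLine.mobius M P) :=
    fun b hb => hb.2
  choose! M hMdet hMeq using key
  apply Set.Finite.of_finite_image
    (f := fun b => (ProjLine.mobius (M b) (some 0), ProjLine.mobius (M b) none,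
      ProjLine.mobius (M b) (some 1)))
  · apply Set.Finite.subset (hFixFin.prod (hFixFin.prod hPreFin))
    rintro _ ⟨b, hb, rfl⟩
    have hdb := hMdet b hb
    have heb := hMeq b hb
    refine ⟨?_, ?_, ?_⟩
    · have h := heb (some 0)
      rw [heval0 b] at h
      exact h.symm
    · have h := heb none
      rw [hevalinf b] at h
      exact h.symm
    · have h := heb (some 1)
      rw [heval1 b] at h
      show ProjLine.eval d (fNum L d a) (fDen L d) (ProjLine.mobius (M b) (some 1)) ∈ Fix
      rw [← h]
      have h0 := heb (some 0)
      rw [heval0 b] at h0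
      exact h0.symm
  · intro b hb b' hb' h
    have hd1 := hMdet b hb
    have hd2 := hMdet b' hb'
    have he1 := hMeq b hb
    have he2 := hMeq b' hb'
    simp only [Prod.mk.injEq] at h
    obtain ⟨h0, hi, h1⟩ := h
    have hmm := MobAux.mobius_ext hd1 hd2 h0 h1 hi
    have hev : ∀ P, ProjLine.eval d (fNum L d b) (fDen L d) P
        = ProjLine.eval d (fNum L d b') (fDen L d) P := by
      intro P
      apply MobAux.mobius_inj hd1
      rw [he1 P, hmm P, ← he2 P, ← hmm _]
    have hevd := hev (some ((d : ℕ) : L))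
    have hevd' : ProjLine.evalAt (fNum L d b) (fDen L d) ((d : ℕ) : L)
        = ProjLine.evalAt (fNum L d b') (fDen L d) ((d : ℕ) : L) := hevd
    unfold ProjLine.evalAt at hevd'
    rw [if_neg (hq0 d), if_neg (hq0 d)] at hevd'
    have h2 := Option.some_injective _ hevd'
    have h3 : (fNum L d b).eval ((d : ℕ) : L) = (fNum L d b').eval ((d : ℕ) : L) := by
      rw [div_eq_div_iff (hq0 d) (hq0 d)] at h2
      exact mul_right_cancel₀ (hq0 d) h2
    rw [fNum_eval_eq b, fNum_eval_eq b'] at h3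
    exact mul_right_cancel₀ (fNum_eval_d (L := L) (one_ne_zero)) h3


end
end
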